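/- arXiv:1504.07386 — 2 statements merged into one kernel-verified Lean document; each statement's English description precedes it below -/
import Mathlib

section
/- For every r > 0 and every real number ℓ with max(-1, -(d+2γ)/(2β)) < ℓ < 0, the function t ↦ 𝓗_{σ,γ}(ℓ+it)·r^{-(ℓ+it)} is Lebesgue (Bochner) integrable on ℝ; in particular the Mellin–Barnes integral 𝔥_{σ,γ}(r) = (1/(2π)) ∫_ℝ 𝓗_{σ,γ}(ℓ+it)·r^{-(ℓ+it)} dt is well defined. -/
open Complex MeasureTheory Filter Asymptotics

section AuxLemmas
open Complex Real Filter Finset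
open Complex Real Filter

-- poly vs exp
lemma aux_pow_le_exp (k : ℕ) {ε : ℝ} (hε : 0 < ε) :
    ∃ C > 0, ∀ t : ℝ, 0 ≤ t → t ^ k ≤ C * Real.exp (ε * t) := by
  refine ⟨(k.factorial : ℝ) * (ε⁻¹) ^ k, by positivity, fun t ht => ?_⟩
  have h1 : (ε * t) ^ k / k.factorial ≤ Real.exp (ε * t) := by
    calc (ε * t) ^ k / k.factorial
        ≤ ∑ i ∈ Finset.range (k + 1), (ε * t) ^ i / i.factorial := by
          refine Finset.single_le_sum (f := fun i => (ε * t) ^ i / i.factorial)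
            (fun i _ => by positivity) (Finset.self_mem_range_succ k)
      _ ≤ Real.exp (ε * t) := Real.sum_le_exp_of_nonneg (by positivity) _
  have h2 : t ^ k = (ε⁻¹) ^ k * (ε * t) ^ k := by
    rw [mul_pow, ← mul_assoc, ← mul_pow, inv_mul_cancel₀ hε.ne', one_pow, one_mul]
  rw [h2]
  calc (ε⁻¹) ^ k * (ε * t) ^ k = (ε⁻¹) ^ k * k.factorial * ((ε * t) ^ k / k.factorial) := by
        field_simp
    _ ≤ (ε⁻¹) ^ k * k.factorial * Real.exp (ε * t) := by
        apply mul_le_mul_of_nonneg_left h1 (by positivity)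
    _ = (k.factorial : ℝ) * (ε⁻¹) ^ k * Real.exp (ε * t) := by ring

-- |sin z| ≤ exp |im z|
lemma aux_norm_sin_le (z : ℂ) : ‖Complex.sin z‖ ≤ Real.exp |z.im| := by
  rw [Complex.sin]
  calc ‖(Complex.exp (-z * I) - Complex.exp (z * I)) * I / 2‖
      = ‖Complex.exp (-z * I) - Complex.exp (z * I)‖ / 2 := by
        simp [norm_div, norm_mul]
    _ ≤ (‖Complex.exp (-z * I)‖ + ‖Complex.exp (z * I)‖) / 2 := by
        gcongr; exact norm_sub_le _ _
    _ = (Real.exp z.im + Real.exp (-z.im)) / 2 := by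
        rw [Complex.norm_exp, Complex.norm_exp]
        simp [mul_re]
    _ ≤ (Real.exp |z.im| + Real.exp |z.im|) / 2 := by
        gcongr <;> [exact le_abs_self _; exact neg_le_abs _]
    _ = Real.exp |z.im| := by ring

-- ratio monotonicity: for 0 < x ≤ 1, ‖Γ(x+iy)‖ ≤ Γ(x) ‖Γ(1+iy)‖
lemma aux_gamma_mono {x : ℝ} (y : ℝ) (hx : 0 < x) (hx1 : x ≤ 1) :
    ‖Complex.Gamma (x + y * I)‖ ≤ Real.Gamma x * ‖Complex.Gamma (1 + y * I)‖ := by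
  have key : ∀ n : ℕ, 1 ≤ n →
      ‖Complex.GammaSeq (x + y * I) n‖ * ‖Complex.GammaSeq 1 n‖ ≤
      ‖Complex.GammaSeq (x : ℂ) n‖ * ‖Complex.GammaSeq (1 + y * I) n‖ := by
    intro n hn
    have hn0 : (0:ℝ) < (n:ℝ) := by exact_mod_cast hn
    simp only [Complex.GammaSeq]
    rw [norm_div, norm_div, norm_div, norm_div, norm_mul, norm_mul, norm_mul, norm_mul]
    have hcast : ((n:ℕ):ℂ) = ((n:ℝ):ℂ) := by push_cast; ring
    have hcp : ∀ s : ℂ, ‖(n : ℂ) ^ s‖ = (n : ℝ) ^ s.re := by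
      intro s
      rw [hcast, Complex.norm_cpow_eq_rpow_re_of_pos hn0]
    rw [hcp, hcp, hcp, hcp]
    have hre1 : ((x:ℂ) + y * I).re = x := by simp
    have hre2 : ((1:ℂ) + y * I).re = 1 := by simp
    have hre3 : ((x:ℂ)).re = x := by simp
    rw [hre1, hre2, hre3, Complex.one_re]
    rw [norm_prod, norm_prod, norm_prod, norm_prod]
    set P1 : ℝ := ∏ j ∈ Finset.range (n+1), ‖(x:ℂ) + y * I + j‖ with hP1
    set Q1 : ℝ := ∏ j ∈ Finset.range (n+1), ‖(1:ℂ) + j‖ with hQ1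
    set P2 : ℝ := ∏ j ∈ Finset.range (n+1), ‖(x:ℂ) + j‖ with hP2
    set Q2 : ℝ := ∏ j ∈ Finset.range (n+1), ‖(1:ℂ) + y * I + j‖ with hQ2
    have hprod : P2 * Q2 ≤ P1 * Q1 := by
      rw [hP1, hQ1, hP2, hQ2, ← Finset.prod_mul_distrib, ← Finset.prod_mul_distrib]
      apply Finset.prod_le_prod
      · intro j _; positivity
      · intro j _
        have e1 : (x:ℂ) + y * I + j = ((x + j : ℝ) : ℂ) + (y:ℝ) * I := by push_cast; ring
        have e2 : (1:ℂ) + y * I + j = ((1 + j : ℝ) : ℂ) + (y:ℝ) * I := by push_cast; ring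
        have e3 : (x:ℂ) + j = ((x + j : ℝ) : ℂ) := by push_cast; ring
        have e4 : (1:ℂ) + j = ((1 + j : ℝ) : ℂ) := by push_cast; ring
        rw [e1, e2, e3, e4]
        rw [Complex.norm_add_mul_I, Complex.norm_add_mul_I, Complex.norm_real, Complex.norm_real,
          Real.norm_eq_abs, Real.norm_eq_abs]
        have hj0 : (0:ℝ) ≤ (j:ℝ) := by positivity
        rw [_root_.abs_of_nonneg (by positivity : (0:ℝ) ≤ x + j),
            _root_.abs_of_nonneg (by positivity : (0:ℝ) ≤ 1 + (j:ℝ))]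
        have h := Real.sqrt_le_sqrt (show (x+(j:ℝ))^2*((1+(j:ℝ))^2+y^2) ≤ ((x+(j:ℝ))^2+y^2)*(1+(j:ℝ))^2 by
          have hkey : (x+(j:ℝ))^2 ≤ (1+(j:ℝ))^2 := by nlinarith
          nlinarith [mul_le_mul_of_nonneg_left hkey (sq_nonneg y)])
        rwa [Real.sqrt_mul (sq_nonneg _), Real.sqrt_mul' _ (sq_nonneg _),
          Real.sqrt_sq (by positivity : (0:ℝ) ≤ x + (j:ℝ)),
          Real.sqrt_sq (by positivity : (0:ℝ) ≤ 1 + (j:ℝ))] at h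
    have h1 : (0:ℝ) < P1 := by
      rw [hP1]; apply Finset.prod_pos; intro j _
      have : (x:ℂ) + y * I + j ≠ 0 := by
        intro h
        have := congrArg Complex.re h
        simp at this
        nlinarith [Nat.cast_nonneg (α := ℝ) j]
      simpa [norm_pos_iff] using this
    have h2 : (0:ℝ) < Q1 := by
      rw [hQ1]; apply Finset.prod_pos; intro j _
      have : ((1:ℂ) + j) ≠ 0 := by
        intro h; have := congrArg Complex.re h; simp at this
        nlinarith [Nat.cast_nonneg (α := ℝ) j]
      simpa [norm_pos_iff] using this
    have h3 : (0:ℝ) < P2 := by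
      rw [hP2]; apply Finset.prod_pos; intro j _
      have : ((x:ℂ) + j) ≠ 0 := by
        intro h; have := congrArg Complex.re h; simp at this
        nlinarith [Nat.cast_nonneg (α := ℝ) j]
      simpa [norm_pos_iff] using this
    have h4 : (0:ℝ) < Q2 := by
      rw [hQ2]; apply Finset.prod_pos; intro j _
      have : ((1:ℂ) + y * I + j) ≠ 0 := by
        intro h; have := congrArg Complex.re h; simp at this
        nlinarith [Nat.cast_nonneg (α := ℝ) j]
      simpa [norm_pos_iff] using this
    rw [div_mul_div_comm, div_mul_div_comm, div_le_div_iff₀ (by positivity) (by positivity)]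
    have : (0:ℝ) ≤ (n:ℝ) ^ x * ‖((n.factorial : ℕ):ℂ)‖ * ((n:ℝ) ^ (1:ℝ) * ‖((n.factorial : ℕ):ℂ)‖) := by
      positivity
    calc (n:ℝ) ^ x * ‖((n.factorial : ℕ):ℂ)‖ * ((n:ℝ) ^ (1:ℝ) * ‖((n.factorial : ℕ):ℂ)‖) * (P2 * Q2)
        ≤ (n:ℝ) ^ x * ‖((n.factorial : ℕ):ℂ)‖ * ((n:ℝ) ^ (1:ℝ) * ‖((n.factorial : ℕ):ℂ)‖) * (P1 * Q1) :=
          mul_le_mul_of_nonneg_left hprod this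
      _ = (n:ℝ) ^ x * ‖((n.factorial : ℕ):ℂ)‖ * ((n:ℝ) ^ (1:ℝ) * ‖((n.factorial : ℕ):ℂ)‖) * (P1 * Q1) := rfl
  -- pass to the limit
  have hA : Tendsto (fun n => ‖Complex.GammaSeq (x + y * I) n‖ * ‖Complex.GammaSeq 1 n‖) atTop
      (nhds (‖Complex.Gamma (x + y * I)‖ * ‖Complex.Gamma 1‖)) :=
    ((Complex.GammaSeq_tendsto_Gamma _).norm).mul ((Complex.GammaSeq_tendsto_Gamma _).norm)
  have hB : Tendsto (fun n => ‖Complex.GammaSeq (x:ℂ) n‖ * ‖Complex.GammaSeq (1 + y * I) n‖) atTop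
      (nhds (‖Complex.Gamma (x:ℂ)‖ * ‖Complex.Gamma (1 + y * I)‖)) :=
    ((Complex.GammaSeq_tendsto_Gamma _).norm).mul ((Complex.GammaSeq_tendsto_Gamma _).norm)
  have hle := le_of_tendsto_of_tendsto hA hB
    (eventually_atTop.2 ⟨1, fun n hn => key n hn⟩)
  rw [Complex.Gamma_one, norm_one, mul_one] at hle
  rw [Complex.Gamma_ofReal] at hle
  rwa [Complex.norm_real, Real.norm_eq_abs, abs_of_pos (Real.Gamma_pos_of_pos hx)] at hle

-- ‖Γ(1+iy)‖² = πy/sinh(πy)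
lemma aux_norm_gamma_one_add (y : ℝ) (hy : y ≠ 0) :
    ‖Complex.Gamma (1 + y * I)‖ ^ 2 = Real.pi * y / Real.sinh (Real.pi * y) := by
  have hz : ((y:ℂ) * I) ≠ 0 := by simp [hy, Complex.ext_iff, I_ne_zero]
  have h1 : Complex.Gamma (1 + y * I) = (y * I) * Complex.Gamma (y * I) := by
    rw [add_comm, Complex.Gamma_add_one _ hz]
  have hrefl := Complex.Gamma_mul_Gamma_one_sub ((y:ℂ) * I)
  have hconj : Complex.Gamma (1 - (y:ℂ) * I) = starRingEnd ℂ (Complex.Gamma (1 + y * I)) := by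
    rw [← Complex.Gamma_conj]
    congr 1
    simp [Complex.ext_iff]
  have hsin : Complex.sin (↑Real.pi * ((y:ℂ) * I)) = (Real.sinh (Real.pi * y) : ℂ) * I := by
    have h : (↑Real.pi * ((y:ℂ) * I)) = ((Real.pi * y : ℝ) : ℂ) * I := by push_cast; ring
    rw [h, Complex.sin_mul_I, Complex.ofReal_sinh]
  have hsh : Real.sinh (Real.pi * y) ≠ 0 := by
    rw [ne_eq, Real.sinh_eq_zero]
    exact mul_ne_zero Real.pi_ne_zero hy
  have hmain : Complex.Gamma (1 + y * I) * starRingEnd ℂ (Complex.Gamma (1 + y * I)) =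
      ((Real.pi * y / Real.sinh (Real.pi * y) : ℝ) : ℂ) := by
    rw [← hconj]
    calc Complex.Gamma (1 + y * I) * Complex.Gamma (1 - (y:ℂ) * I)
        = (y * I) * (Complex.Gamma ((y:ℂ) * I) * Complex.Gamma (1 - (y:ℂ) * I)) := by
          rw [h1]; ring
      _ = (y * I) * (↑Real.pi / Complex.sin (↑Real.pi * ((y:ℂ) * I))) := by rw [hrefl]
      _ = ((Real.pi * y / Real.sinh (Real.pi * y) : ℝ) : ℂ) := by
          rw [hsin]
          push_cast
          have hI : (I:ℂ) ≠ 0 := I_ne_zero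
          have hs : ((Real.sinh (Real.pi * y) : ℝ) : ℂ) ≠ 0 := by exact_mod_cast hsh
          push_cast
          have hS : Complex.sinh ((Real.pi : ℂ) * y) ≠ 0 := by
            rw [show ((Real.pi : ℂ) * y) = ((Real.pi * y : ℝ) : ℂ) by push_cast; ring,
              ← Complex.ofReal_sinh]
            exact_mod_cast hsh
          rw [mul_div_assoc', div_eq_div_iff (mul_ne_zero hS hI) hS]
          ring
  rw [Complex.mul_conj] at hmain
  have : Complex.normSq (Complex.Gamma (1 + y * I)) = Real.pi * y / Real.sinh (Real.pi * y) := by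
    exact_mod_cast hmain
  rw [← Complex.normSq_eq_norm_sq, this]

-- single upward step
lemma aux_step {x y : ℝ} (hy : 1 ≤ |y|) :
    ‖Complex.Gamma (x + y * I)‖ ≤ ‖Complex.Gamma ((x + 1 : ℝ) + y * I)‖ := by
  have hz : ((x:ℂ) + y * I) ≠ 0 := by
    intro h
    have := congrArg Complex.im h
    simp at this
    rw [this] at hy; simp at hy; linarith
  have h1 : ((x + 1 : ℝ) : ℂ) + y * I = ((x:ℂ) + y * I) + 1 := by push_cast; ring
  rw [h1, Complex.Gamma_add_one _ hz, norm_mul]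
  have h2 : 1 ≤ ‖(x:ℂ) + y * I‖ := by
    calc (1:ℝ) ≤ |y| := hy
      _ = |((x:ℂ) + y * I).im| := by simp
      _ ≤ ‖(x:ℂ) + y * I‖ := Complex.abs_im_le_norm _
  nlinarith [norm_nonneg (Complex.Gamma ((x:ℂ) + y * I))]

-- shift up n steps
lemma aux_shiftup (n : ℕ) {x y : ℝ} (hy : 1 ≤ |y|) :
    ‖Complex.Gamma (x + y * I)‖ ≤ ‖Complex.Gamma ((x + n : ℝ) + y * I)‖ := by
  induction n with
  | zero => simp
  | succ n ih =>
    refine ih.trans ?_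
    have := aux_step (x := x + n) hy
    rwa [show ((x + n : ℝ) + 1 : ℝ) = (x + (n+1:ℕ) : ℝ) by push_cast; ring] at this

-- shift down: ‖Γ((x₀+m)+yI)‖ ≤ ((1+x₀+m)·|y|)^m ‖Γ(x₀+yI)‖
lemma aux_shiftdown (m : ℕ) {x y : ℝ} (hx : 0 < x) (hy : 1 ≤ |y|) :
    ‖Complex.Gamma ((x + m : ℝ) + y * I)‖ ≤
      ((1 + x + m) * |y|) ^ m * ‖Complex.Gamma (x + y * I)‖ := by
  induction m with
  | zero => simp
  | succ m ih =>
    have hz : ((x + m : ℝ) : ℂ) + y * I ≠ 0 := by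
      intro h
      have := congrArg Complex.im h
      simp at this
      rw [this] at hy; simp at hy; linarith
    have h1 : (((x + (m+1:ℕ)) : ℝ) : ℂ) + y * I = (((x + m : ℝ) : ℂ) + y * I) + 1 := by
      push_cast; ring
    rw [h1, Complex.Gamma_add_one _ hz, norm_mul]
    have h2 : ‖((x + m : ℝ) : ℂ) + y * I‖ ≤ (1 + x + (m+1:ℕ)) * |y| := by
      calc ‖((x + m : ℝ) : ℂ) + y * I‖ ≤ ‖((x + m : ℝ) : ℂ)‖ + ‖(y:ℂ) * I‖ := norm_add_le _ _
        _ = |x + (m:ℝ)| + |y| := by rw [Complex.norm_real, Real.norm_eq_abs, norm_mul,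
              Complex.norm_I, mul_one, Complex.norm_real, Real.norm_eq_abs]
        _ = (x + (m:ℝ)) + |y| := by rw [_root_.abs_of_nonneg (by positivity)]
        _ ≤ (x + m) * |y| + |y| := by nlinarith [le_trans (le_refl (1:ℝ)) hy, hx]
        _ ≤ (1 + x + (m+1:ℕ)) * |y| := by push_cast; nlinarith [abs_nonneg y]
    have hbase : ((1 + x + m) * |y|) ^ m ≤ ((1 + x + (m+1:ℕ)) * |y|) ^ m := by
      apply pow_le_pow_left₀ (by positivity)
      push_cast
      nlinarith [abs_nonneg y, le_trans (le_refl (1:ℝ)) hy]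
    calc ‖((x + m : ℝ) : ℂ) + y * I‖ * ‖Complex.Gamma (((x + m : ℝ) : ℂ) + y * I)‖
        ≤ ((1 + x + (m+1:ℕ)) * |y|) * (((1 + x + m) * |y|) ^ m * ‖Complex.Gamma (x + y * I)‖) := by
          apply mul_le_mul h2 ih (norm_nonneg _) (by positivity)
      _ ≤ ((1 + x + (m+1:ℕ)) * |y|) * (((1 + x + (m+1:ℕ)) * |y|) ^ m * ‖Complex.Gamma (x + y * I)‖) := by
          apply mul_le_mul_of_nonneg_left (mul_le_mul_of_nonneg_right hbase (norm_nonneg _)) (by positivity)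
      _ = ((1 + x + (m+1:ℕ)) * |y|) ^ (m+1) * ‖Complex.Gamma (x + y * I)‖ := by ring

-- bound for ‖Γ(1+iy)‖
lemma aux_gamma_one_bound {y : ℝ} (hy : 1 ≤ |y|) :
    ‖Complex.Gamma (1 + y * I)‖ ≤ 2 * Real.sqrt Real.pi * |y| * Real.exp (-(Real.pi/2) * |y|) := by
  have hy0 : y ≠ 0 := by intro h; rw [h] at hy; simp at hy; linarith
  have hid := aux_norm_gamma_one_add y hy0
  set a := |y| with ha
  have ha1 : 1 ≤ a := hy
  have heven : Real.pi * y / Real.sinh (Real.pi * y) = Real.pi * a / Real.sinh (Real.pi * a) := by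
    rcases le_or_gt 0 y with h | h
    · rw [ha, _root_.abs_of_nonneg h]
    · rw [ha, _root_.abs_of_neg h]
      rw [show Real.pi * -y = -(Real.pi * y) by ring, Real.sinh_neg, neg_div_neg_eq]
  have hexp4 : 4 ≤ Real.exp (Real.pi * a) := by
    have : 3 ≤ Real.pi * a := by nlinarith [Real.pi_gt_three]
    calc (4:ℝ) = 3 + 1 := by norm_num
      _ ≤ Real.pi * a + 1 := by linarith
      _ ≤ Real.exp (Real.pi * a) := by linarith [Real.add_one_le_exp (Real.pi * a)]
  have hsinh : Real.exp (Real.pi * a) / 4 ≤ Real.sinh (Real.pi * a) := by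
    rw [Real.sinh_eq]
    have h1 : Real.exp (-(Real.pi * a)) ≤ 1 := by
      rw [Real.exp_le_one_iff]; nlinarith [Real.pi_gt_three]
    nlinarith
  have hsinh0 : 0 < Real.sinh (Real.pi * a) := by
    calc (0:ℝ) < Real.exp (Real.pi * a) / 4 := by positivity
      _ ≤ _ := hsinh
  have hsq : ‖Complex.Gamma (1 + y * I)‖ ^ 2 ≤ 4 * Real.pi * a * Real.exp (-(Real.pi * a)) := by
    rw [hid, heven]
    rw [div_le_iff₀ hsinh0]
    rw [Real.exp_neg]
    have h2 : Real.pi * a = 4 * Real.pi * a * (Real.exp (Real.pi * a))⁻¹ * (Real.exp (Real.pi * a) / 4) := by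
      field_simp
    calc Real.pi * a = 4 * Real.pi * a * (Real.exp (Real.pi * a))⁻¹ * (Real.exp (Real.pi * a) / 4) := h2
      _ ≤ 4 * Real.pi * a * (Real.exp (Real.pi * a))⁻¹ * Real.sinh (Real.pi * a) := by
          gcongr
  have hT2 : (2 * Real.sqrt Real.pi * a * Real.exp (-(Real.pi/2) * a)) ^ 2
      = 4 * Real.pi * a^2 * Real.exp (-(Real.pi * a)) := by
    have e2 : Real.exp (-(Real.pi/2) * a) ^ 2 = Real.exp (-(Real.pi * a)) := by
      rw [sq, ← Real.exp_add]; congr 1; ring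
    rw [mul_pow, mul_pow, mul_pow, e2, Real.sq_sqrt Real.pi_pos.le]
    ring
  have hsq2 : ‖Complex.Gamma (1 + y * I)‖ ^ 2
      ≤ (2 * Real.sqrt Real.pi * a * Real.exp (-(Real.pi/2) * a)) ^ 2 := by
    rw [hT2]
    refine hsq.trans ?_
    have : 4 * Real.pi * a ≤ 4 * Real.pi * a ^ 2 := by
      nlinarith [mul_le_mul_of_nonneg_left ha1 (by positivity : (0:ℝ) ≤ 4 * Real.pi * a)]
    apply mul_le_mul_of_nonneg_right this (Real.exp_pos _).le
  calc ‖Complex.Gamma (1 + y * I)‖ = Real.sqrt (‖Complex.Gamma (1 + y * I)‖ ^ 2) := by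
        rw [Real.sqrt_sq (norm_nonneg _)]
    _ ≤ Real.sqrt ((2 * Real.sqrt Real.pi * a * Real.exp (-(Real.pi/2) * a)) ^ 2) :=
        Real.sqrt_le_sqrt hsq2
    _ = 2 * Real.sqrt Real.pi * a * Real.exp (-(Real.pi/2) * a) := by
        rw [Real.sqrt_sq (by positivity)]

-- the main decay lemma
lemma aux_gamma_decay (x : ℝ) {ε : ℝ} (hε : 0 < ε) :
    ∃ C > 0, ∀ y : ℝ, 1 ≤ |y| →
      ‖Complex.Gamma (x + y * I)‖ ≤ C * Real.exp ((ε - Real.pi/2) * |y|) := by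
  set n : ℕ := ⌈|x|⌉₊ + 1 with hn
  have hx' : 0 < x + n := by
    have h1 : |x| ≤ (⌈|x|⌉₊ : ℝ) := Nat.le_ceil _
    have h2 : -x ≤ |x| := neg_le_abs x
    have : (n:ℝ) = (⌈|x|⌉₊ : ℝ) + 1 := by rw [hn]; push_cast; ring
    nlinarith
  set x' : ℝ := x + n with hx'def
  set m : ℕ := ⌈x'⌉₊ - 1 with hm
  have hceil1 : 1 ≤ ⌈x'⌉₊ := Nat.one_le_iff_ne_zero.2 (by
    intro h
    rw [Nat.ceil_eq_zero] at h
    linarith)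
  have hmcast : (m:ℝ) = (⌈x'⌉₊ : ℝ) - 1 := by
    rw [hm, Nat.cast_sub hceil1]; simp
  set x₀ : ℝ := x' - m with hx₀
  have hx₀pos : 0 < x₀ := by
    have := Nat.ceil_lt_add_one (le_of_lt hx')
    rw [hx₀, hmcast]; linarith
  have hx₀le : x₀ ≤ 1 := by
    have := Nat.le_ceil x'
    rw [hx₀, hmcast]; linarith
  obtain ⟨C₂, hC₂pos, hC₂⟩ := aux_pow_le_exp (m + 1) hε
  refine ⟨(1 + x₀ + m) ^ m * (Real.Gamma x₀ * (2 * Real.sqrt Real.pi)) * C₂,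
    by positivity, fun y hy => ?_⟩
  have step1 : ‖Complex.Gamma (x + y * I)‖ ≤ ‖Complex.Gamma ((x':ℝ) + y * I)‖ := by
    exact aux_shiftup n hy
  have hxeq : ((x':ℝ):ℂ) = (((x₀ + m : ℝ)):ℂ) := by
    rw [hx₀]; push_cast; ring
  have step2 : ‖Complex.Gamma ((x':ℝ) + y * I)‖ ≤
      ((1 + x₀ + m) * |y|) ^ m * ‖Complex.Gamma (x₀ + y * I)‖ := by
    rw [hxeq]
    exact aux_shiftdown m hx₀pos hy
  have step3 : ‖Complex.Gamma ((x₀:ℝ) + y * I)‖ ≤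
      Real.Gamma x₀ * (2 * Real.sqrt Real.pi * |y| * Real.exp (-(Real.pi/2) * |y|)) := by
    refine (aux_gamma_mono y hx₀pos hx₀le).trans ?_
    exact mul_le_mul_of_nonneg_left (aux_gamma_one_bound hy) (Real.Gamma_pos_of_pos hx₀pos).le
  have hpow : |y| ^ (m+1) ≤ C₂ * Real.exp (ε * |y|) := hC₂ _ (abs_nonneg _)
  calc ‖Complex.Gamma (x + y * I)‖
      ≤ ((1 + x₀ + m) * |y|) ^ m * (Real.Gamma x₀ *
          (2 * Real.sqrt Real.pi * |y| * Real.exp (-(Real.pi/2) * |y|))) := by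
        refine step1.trans (step2.trans ?_)
        exact mul_le_mul_of_nonneg_left step3 (by positivity)
    _ = (1 + x₀ + m) ^ m * (Real.Gamma x₀ * (2 * Real.sqrt Real.pi)) *
          (|y| ^ (m+1)) * Real.exp (-(Real.pi/2) * |y|) := by
        rw [mul_pow]; ring
    _ ≤ (1 + x₀ + m) ^ m * (Real.Gamma x₀ * (2 * Real.sqrt Real.pi)) *
          (C₂ * Real.exp (ε * |y|)) * Real.exp (-(Real.pi/2) * |y|) := by
        have h0 : (0:ℝ) ≤ (1 + x₀ + m) ^ m * (Real.Gamma x₀ * (2 * Real.sqrt Real.pi)) := by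
          have := (Real.Gamma_pos_of_pos hx₀pos).le
          positivity
        apply mul_le_mul_of_nonneg_right _ (Real.exp_pos _).le
        exact mul_le_mul_of_nonneg_left hpow h0
    _ = (1 + x₀ + m) ^ m * (Real.Gamma x₀ * (2 * Real.sqrt Real.pi)) * C₂ *
          Real.exp ((ε - Real.pi/2) * |y|) := by
        rw [show (ε - Real.pi/2) * |y| = ε*|y| + (-(Real.pi/2)*|y|) by ring, Real.exp_add]; ring

-- reciprocal decay
lemma aux_recip_decay (x : ℝ) {ε : ℝ} (hε : 0 < ε) :
    ∃ C > 0, ∀ y : ℝ, 1 ≤ |y| →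
      ‖Complex.Gamma (x + y * I)‖⁻¹ ≤ C * Real.exp ((Real.pi/2 + ε) * |y|) := by
  obtain ⟨C, hCpos, hC⟩ := aux_gamma_decay (1 - x) hε
  refine ⟨C / Real.pi, by positivity, fun y hy => ?_⟩
  have hy0 : y ≠ 0 := by intro h; rw [h] at hy; simp at hy; linarith
  set z : ℂ := (x:ℂ) + y * I with hz
  have hzim : z.im = y := by simp [hz]
  have hπ : ((Real.pi : ℝ) : ℂ) ≠ 0 := Complex.ofReal_ne_zero.mpr Real.pi_ne_zero
  have hsin_ne : Complex.sin (↑Real.pi * z) ≠ 0 := by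
    intro h
    rw [Complex.sin_eq_zero_iff] at h
    obtain ⟨k, hk⟩ := h
    have := congrArg Complex.im hk
    simp [Complex.mul_im, hzim, Real.pi_ne_zero, hy0] at this
  have hrefl := Complex.Gamma_mul_Gamma_one_sub z
  have key : (Complex.Gamma z)⁻¹ = Complex.Gamma (1 - z) * Complex.sin (↑Real.pi * z) / ↑Real.pi := by
    have hprod : Complex.Gamma z * (Complex.Gamma (1 - z) * Complex.sin (↑Real.pi * z)) = ↑Real.pi := by
      rw [← mul_assoc, hrefl, div_mul_cancel₀ _ hsin_ne]
    exact inv_eq_of_mul_eq_one_right (by rw [← mul_div_assoc, hprod, div_self hπ])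
  have h1z : (1 : ℂ) - z = ((1 - x : ℝ) : ℂ) + ((-y : ℝ)) * I := by
    rw [hz]; push_cast; ring
  have hsin_bound : ‖Complex.sin (↑Real.pi * z)‖ ≤ Real.exp (Real.pi * |y|) := by
    refine (aux_norm_sin_le _).trans (Real.exp_le_exp.mpr ?_)
    have him : ((Real.pi : ℂ) * z).im = Real.pi * y := by simp [Complex.mul_im, hzim]
    rw [him, abs_mul, _root_.abs_of_pos Real.pi_pos]
  have hgb : ‖Complex.Gamma (1 - z)‖ ≤ C * Real.exp ((ε - Real.pi/2) * |y|) := by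
    rw [h1z]
    have := hC (-y) (by rwa [abs_neg])
    rwa [abs_neg] at this
  rw [← norm_inv, key]
  rw [norm_div, norm_mul]
  have hnπ : ‖((Real.pi : ℝ) : ℂ)‖ = Real.pi := by
    rw [Complex.norm_real, Real.norm_eq_abs, _root_.abs_of_pos Real.pi_pos]
  rw [hnπ]
  rw [div_le_iff₀ Real.pi_pos]
  calc ‖Complex.Gamma (1 - z)‖ * ‖Complex.sin (↑Real.pi * z)‖
      ≤ (C * Real.exp ((ε - Real.pi/2) * |y|)) * Real.exp (Real.pi * |y|) := by
        exact mul_le_mul hgb hsin_bound (norm_nonneg _) (by positivity)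
    _ = C * Real.exp ((Real.pi/2 + ε) * |y|) := by
        rw [mul_assoc, ← Real.exp_add]
        congr 2
        ring
    _ = C / Real.pi * Real.exp ((Real.pi/2 + ε) * |y|) * Real.pi := by
        field_simp

end AuxLemmas

lemma aux_int_exp_Iic (a : ℝ) {c : ℝ} (hc : 0 < c) :
    MeasureTheory.IntegrableOn (fun t : ℝ => Real.exp (c * t)) (Set.Iic a) := by
  have h3 : MeasureTheory.IntegrableOn (fun t : ℝ => Real.exp (-c * t)) (Set.Ici (-a)) := by
    rw [integrableOn_Ici_iff_integrableOn_Ioi]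
    exact exp_neg_integrableOn_Ioi (-a) hc
  have h4 := (MeasureTheory.integrable_indicator_iff measurableSet_Ici).mpr h3
  have h5 := h4.comp_neg
  have h6 : (fun t : ℝ => (Set.Ici (-a)).indicator (fun s : ℝ => Real.exp (-c * s)) (-t))
      = (Set.Iic a).indicator (fun t : ℝ => Real.exp (c * t)) := by
    funext t
    by_cases ht : t ≤ a
    · rw [Set.indicator_of_mem (by simpa using ht), Set.indicator_of_mem (by simpa using ht)]
      congr 1; ring
    · rw [Set.indicator_of_notMem (by simpa using ht),
        Set.indicator_of_notMem (by simpa using ht)]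
  rw [h6] at h5
  exact (MeasureTheory.integrable_indicator_iff measurableSet_Iic).mp h5

/-- The Mellin-Barnes integrand factor
`𝓗_{σ,γ}(z) = Γ(d/2+γ+βz)·Γ(1+z)·Γ(-z) / (Γ(-γ-βz)·Γ(1-σ+αz))`.
Note that `Complex.Gamma` vanishes at the poles of the Gamma function, so division by it
realizes the entire reciprocal Gamma function. -/
noncomputable def HFun (d : ℕ) (α β γ σ : ℝ) (z : ℂ) : ℂ :=
  Complex.Gamma ((d : ℂ) / 2 + (γ : ℂ) + (β : ℂ) * z) * Complex.Gamma (1 + z) *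
      Complex.Gamma (-z) /
    (Complex.Gamma (-(γ : ℂ) - (β : ℂ) * z) * Complex.Gamma (1 - (σ : ℂ) + (α : ℂ) * z))

/-- The integrand `t ↦ 𝓗_{σ,γ}(ℓ+it)·r^{-(ℓ+it)}` of the Mellin-Barnes integral,
where `r^{-z} = exp(-z·ln r)`. -/
noncomputable def mellinKernel (d : ℕ) (α β γ σ ℓ r : ℝ) (t : ℝ) : ℂ :=
  HFun d α β γ σ ((ℓ : ℂ) + (t : ℂ) * Complex.I) *
    Complex.exp (-((ℓ : ℂ) + (t : ℂ) * Complex.I) * (Real.log r : ℂ))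

/-- The Mellin-Barnes integral `𝔥_{σ,γ}(r) = (1/(2π)) ∫_ℝ 𝓗_{σ,γ}(ℓ+it)·r^{-(ℓ+it)} dt`. -/
noncomputable def hFun (d : ℕ) (α β γ σ ℓ : ℝ) (r : ℝ) : ℂ :=
  ((1 / (2 * Real.pi) : ℝ) : ℂ) * ∫ t : ℝ, mellinKernel d α β γ σ ℓ r t

/-- For every `r > 0` and every real `ℓ` with
`max(-1, -(d+2γ)/(2β)) < ℓ < 0`, the function `t ↦ 𝓗_{σ,γ}(ℓ+it)·r^{-(ℓ+it)}` is
Bochner integrable on `ℝ`; in particular the Mellin–Barnes integral `𝔥_{σ,γ}(r)`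
is well defined. -/
theorem stmt0 (d : ℕ) (hd : 1 ≤ d) (α β γ σ : ℝ) (hα : 0 < α) (hα2 : α < 2)
    (hβ : 0 < β) (hγ : 0 ≤ γ) (r : ℝ) (hr : 0 < r) (ℓ : ℝ)
    (hℓ1 : max (-1 : ℝ) (-((d : ℝ) + 2 * γ) / (2 * β)) < ℓ) (hℓ2 : ℓ < 0) :
    MeasureTheory.Integrable (fun t : ℝ => mellinKernel d α β γ σ ℓ r t) := by
  rw [max_lt_iff] at hℓ1
  obtain ⟨hℓa, hℓb⟩ := hℓ1
  have hdpos : (0:ℝ) < d := by exact_mod_cast hd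
  have ha1 : 0 < (d:ℝ)/2 + γ + β*ℓ := by
    have := (div_lt_iff₀ (by positivity : (0:ℝ) < 2*β)).mp hℓb
    nlinarith
  have ha2 : 0 < 1 + ℓ := by linarith
  have ha3 : 0 < -ℓ := by linarith
  set A1 : ℝ → ℂ := fun t => (((d:ℝ)/2 + γ + β*ℓ : ℝ) : ℂ) + ((β*t : ℝ) : ℂ) * I with hA1def
  set A2 : ℝ → ℂ := fun t => ((1 + ℓ : ℝ) : ℂ) + ((t : ℝ) : ℂ) * I with hA2def
  set A3 : ℝ → ℂ := fun t => ((-ℓ : ℝ) : ℂ) + ((-t : ℝ) : ℂ) * I with hA3def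
  set A4 : ℝ → ℂ := fun t => ((-γ - β*ℓ : ℝ) : ℂ) + ((-(β*t) : ℝ) : ℂ) * I with hA4def
  set A5 : ℝ → ℂ := fun t => ((1 - σ + α*ℓ : ℝ) : ℂ) + ((α*t : ℝ) : ℂ) * I with hA5def
  have hker : ∀ t : ℝ, mellinKernel d α β γ σ ℓ r t =
      Complex.Gamma (A1 t) * Complex.Gamma (A2 t) * Complex.Gamma (A3 t) *
        ((Complex.Gamma (A4 t))⁻¹ * (Complex.Gamma (A5 t))⁻¹) *
        Complex.exp (-((ℓ:ℂ) + (t:ℂ) * I) * ((Real.log r : ℝ) : ℂ)) := by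
    intro t
    have e1 : (d:ℂ)/2 + (γ:ℂ) + (β:ℂ) * ((ℓ:ℂ) + (t:ℂ) * I) = A1 t := by
      rw [hA1def]; push_cast; ring
    have e2 : 1 + ((ℓ:ℂ) + (t:ℂ) * I) = A2 t := by rw [hA2def]; push_cast; ring
    have e3 : -((ℓ:ℂ) + (t:ℂ) * I) = A3 t := by rw [hA3def]; push_cast; ring
    have e4 : -(γ:ℂ) - (β:ℂ) * ((ℓ:ℂ) + (t:ℂ) * I) = A4 t := by
      rw [hA4def]; push_cast; ring
    have e5 : 1 - (σ:ℂ) + (α:ℂ) * ((ℓ:ℂ) + (t:ℂ) * I) = A5 t := by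
      rw [hA5def]; push_cast; ring
    simp only [mellinKernel, HFun]
    rw [e1, e2, e3, e4, e5, div_eq_mul_inv, mul_inv]
  have hA1c : Continuous A1 := by rw [hA1def]; fun_prop
  have hA2c : Continuous A2 := by rw [hA2def]; fun_prop
  have hA3c : Continuous A3 := by rw [hA3def]; fun_prop
  have hA4c : Continuous A4 := by rw [hA4def]; fun_prop
  have hA5c : Continuous A5 := by rw [hA5def]; fun_prop
  have hgam : ∀ (a : ℝ), 0 < a → ∀ (b : ℝ) (A : ℝ → ℂ), Continuous A →
      (∀ t, A t = ((a : ℝ) : ℂ) + ((b*t : ℝ) : ℂ) * I) →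
      Continuous fun t => Complex.Gamma (A t) := by
    intro a ha b A hAc hAeq
    rw [continuous_iff_continuousAt]
    intro t
    refine (Complex.differentiableAt_Gamma _ fun m => ?_).continuousAt.comp hAc.continuousAt
    rw [hAeq t]
    intro h
    have hre := congrArg Complex.re h
    simp at hre
    have h0 : (0:ℝ) ≤ (m:ℝ) := Nat.cast_nonneg m
    linarith
  have hg1 : Continuous fun t => Complex.Gamma (A1 t) :=
    hgam _ ha1 β A1 hA1c (fun t => by rw [hA1def])
  have hg2 : Continuous fun t => Complex.Gamma (A2 t) :=
    hgam _ ha2 1 A2 hA2c (fun t => by rw [hA2def]; norm_num)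
  have hg3 : Continuous fun t => Complex.Gamma (A3 t) :=
    hgam _ ha3 (-1) A3 hA3c (fun t => by rw [hA3def]; norm_num)
  have hg4 : Continuous fun t => (Complex.Gamma (A4 t))⁻¹ :=
    Complex.differentiable_one_div_Gamma.continuous.comp hA4c
  have hg5 : Continuous fun t => (Complex.Gamma (A5 t))⁻¹ :=
    Complex.differentiable_one_div_Gamma.continuous.comp hA5c
  have hexpc : Continuous fun t : ℝ =>
      Complex.exp (-((ℓ:ℂ) + (t:ℂ) * I) * ((Real.log r : ℝ) : ℂ)) := by fun_prop
  have hcont : Continuous (fun t : ℝ => mellinKernel d α β γ σ ℓ r t) := by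
    have hfun : (fun t : ℝ => mellinKernel d α β γ σ ℓ r t) = fun t =>
        Complex.Gamma (A1 t) * Complex.Gamma (A2 t) * Complex.Gamma (A3 t) *
        ((Complex.Gamma (A4 t))⁻¹ * (Complex.Gamma (A5 t))⁻¹) *
        Complex.exp (-((ℓ:ℂ) + (t:ℂ) * I) * ((Real.log r : ℝ) : ℂ)) := funext hker
    rw [hfun]
    exact (((hg1.mul hg2).mul hg3).mul (hg4.mul hg5)).mul hexpc
  set ε : ℝ := Real.pi * (2 - α) / (4 * (2*β + α + 2)) with hεdef
  have hεpos : 0 < ε := by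
    rw [hεdef]
    have h2α : 0 < 2 - α := by linarith
    have := Real.pi_pos
    positivity
  set c : ℝ := Real.pi * (2 - α) / 4 with hcdef
  have hcpos : 0 < c := by
    rw [hcdef]
    have h2α : 0 < 2 - α := by linarith
    have := Real.pi_pos
    positivity
  obtain ⟨C1, hC1pos, hB1⟩ := aux_gamma_decay ((d:ℝ)/2 + γ + β*ℓ) hεpos
  obtain ⟨C2, hC2pos, hB2⟩ := aux_gamma_decay (1 + ℓ) hεpos
  obtain ⟨C3, hC3pos, hB3⟩ := aux_gamma_decay (-ℓ) hεpos
  obtain ⟨C4, hC4pos, hB4⟩ := aux_recip_decay (-γ - β*ℓ) hεpos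
  obtain ⟨C5, hC5pos, hB5⟩ := aux_recip_decay (1 - σ + α*ℓ) hεpos
  set K : ℝ := Real.exp (-ℓ * Real.log r) with hKdef
  have hKpos : 0 < K := Real.exp_pos _
  set M : ℝ := C1 * C2 * C3 * (C4 * C5) * K with hMdef
  have hMpos : 0 < M := by
    rw [hMdef]
    positivity
  set T : ℝ := max 1 (max β⁻¹ α⁻¹) with hTdef
  have hT1 : (1:ℝ) ≤ T := le_max_left _ _
  have hTpos : 0 < T := lt_of_lt_of_le one_pos hT1
  have hexpid : (ε - Real.pi/2)*β + (ε - Real.pi/2) + (ε - Real.pi/2) +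
      ((Real.pi/2 + ε)*β + (Real.pi/2 + ε)*α) = -c := by
    rw [hεdef, hcdef]
    field_simp
    ring
  have htail : ∀ t : ℝ, T ≤ |t| →
      ‖mellinKernel d α β γ σ ℓ r t‖ ≤ M * Real.exp (-c * |t|) := by
    intro t ht
    have ht1 : 1 ≤ |t| := le_trans hT1 ht
    have htβ : 1 ≤ |β*t| := by
      rw [abs_mul, _root_.abs_of_pos hβ]
      have h1 : β⁻¹ ≤ T := le_trans (le_max_left _ _) (le_max_right _ _)
      calc (1:ℝ) = β * β⁻¹ := by field_simp
        _ ≤ β * |t| := mul_le_mul_of_nonneg_left (le_trans h1 ht) hβ.le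
    have htα : 1 ≤ |α*t| := by
      rw [abs_mul, _root_.abs_of_pos hα]
      have h1 : α⁻¹ ≤ T := le_trans (le_max_right _ _) (le_max_right _ _)
      calc (1:ℝ) = α * α⁻¹ := by field_simp
        _ ≤ α * |t| := mul_le_mul_of_nonneg_left (le_trans h1 ht) hα.le
    have htβn : 1 ≤ |(-(β*t))| := by rwa [abs_neg]
    have htn : 1 ≤ |(-t)| := by rwa [abs_neg]
    rw [hker t, norm_mul, norm_mul, norm_mul, norm_mul, norm_mul, norm_inv, norm_inv]
    have hexpK : ‖Complex.exp (-((ℓ:ℂ) + (t:ℂ) * I) * ((Real.log r : ℝ) : ℂ))‖ = K := by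
      rw [Complex.norm_exp, hKdef]
      congr 1
      simp [Complex.mul_re]
    rw [hexpK]
    have b1 := hB1 (β*t) htβ
    have b2 := hB2 t ht1
    have b3 := hB3 (-t) htn
    have b4 := hB4 (-(β*t)) htβn
    have b5 := hB5 (α*t) htα
    rw [hA1def, hA2def, hA3def, hA4def, hA5def] at *
    have p12 := mul_le_mul b1 b2 (norm_nonneg _)
      (mul_nonneg hC1pos.le (Real.exp_pos _).le)
    have p123 := mul_le_mul p12 b3 (norm_nonneg _)
      (mul_nonneg (mul_nonneg hC1pos.le (Real.exp_pos _).le)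
        (mul_nonneg hC2pos.le (Real.exp_pos _).le))
    have p45 := mul_le_mul b4 b5 (inv_nonneg.mpr (norm_nonneg _))
      (mul_nonneg hC4pos.le (Real.exp_pos _).le)
    have pall := mul_le_mul p123 p45
      (mul_nonneg (inv_nonneg.mpr (norm_nonneg _)) (inv_nonneg.mpr (norm_nonneg _)))
      (by positivity)
    have pfin := mul_le_mul_of_nonneg_right pall hKpos.le
    refine pfin.trans (le_of_eq ?_)
    rw [abs_neg, abs_neg, abs_mul, abs_mul, _root_.abs_of_pos hβ, _root_.abs_of_pos hα]
    have hsum : (ε - Real.pi/2) * (β*|t|) + (ε - Real.pi/2) * |t| + (ε - Real.pi/2) * |t| +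
        ((Real.pi/2 + ε) * (β*|t|) + (Real.pi/2 + ε) * (α*|t|)) = -c * |t| := by
      linear_combination |t| * hexpid
    calc C1 * Real.exp ((ε - Real.pi/2) * (β*|t|)) * (C2 * Real.exp ((ε - Real.pi/2) * |t|)) *
          (C3 * Real.exp ((ε - Real.pi/2) * |t|)) *
          (C4 * Real.exp ((Real.pi/2 + ε) * (β*|t|)) * (C5 * Real.exp ((Real.pi/2 + ε) * (α*|t|)))) * K
        = C1 * C2 * C3 * (C4 * C5) * K *
            Real.exp ((ε - Real.pi/2) * (β*|t|) + (ε - Real.pi/2) * |t| + (ε - Real.pi/2) * |t| +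
              ((Real.pi/2 + ε) * (β*|t|) + (Real.pi/2 + ε) * (α*|t|))) := by
          rw [Real.exp_add, Real.exp_add, Real.exp_add, Real.exp_add]
          ring
      _ = M * Real.exp (-c * |t|) := by rw [hsum, hMdef]
  -- assemble integrability
  have hmeas := hcont.aestronglyMeasurable (μ := (MeasureTheory.volume : MeasureTheory.Measure ℝ))
  have hmid : MeasureTheory.IntegrableOn (fun t : ℝ => mellinKernel d α β γ σ ℓ r t)
      (Set.Icc (-T) T) := hcont.integrableOn_Icc
  have hpos : MeasureTheory.IntegrableOn (fun t : ℝ => mellinKernel d α β γ σ ℓ r t)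
      (Set.Ioi T) := by
    refine MeasureTheory.Integrable.mono'
      ((exp_neg_integrableOn_Ioi T hcpos).const_mul M) hmeas.restrict ?_
    rw [MeasureTheory.ae_restrict_iff' measurableSet_Ioi]
    refine MeasureTheory.ae_of_all _ fun t htt => ?_
    have htT : T < t := htt
    have habs : |t| = t := _root_.abs_of_pos (lt_trans hTpos htT)
    have := htail t (by rw [habs]; exact htT.le)
    rwa [habs] at this
  have hneg : MeasureTheory.IntegrableOn (fun t : ℝ => mellinKernel d α β γ σ ℓ r t)
      (Set.Iic (-T)) := by
    refine MeasureTheory.Integrable.mono'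
      ((aux_int_exp_Iic (-T) hcpos).const_mul M) hmeas.restrict ?_
    rw [MeasureTheory.ae_restrict_iff' measurableSet_Iic]
    refine MeasureTheory.ae_of_all _ fun t htt => ?_
    have htT : t ≤ -T := htt
    have habs : |t| = -t := abs_of_neg (by linarith)
    have h2 := htail t (by rw [habs]; linarith)
    rw [habs] at h2
    refine h2.trans (le_of_eq ?_)
    congr 1
    ring
  have hcover : (Set.univ : Set ℝ) ⊆ Set.Iic (-T) ∪ (Set.Icc (-T) T ∪ Set.Ioi T) := by
    intro x _
    rcases le_or_gt x (-T) with h | h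
    · exact Set.mem_union_left _ h
    · rcases le_or_gt x T with h2 | h2
      · exact Set.mem_union_right _ (Set.mem_union_left _ ⟨h.le, h2⟩)
      · exact Set.mem_union_right _ (Set.mem_union_right _ h2)
  rw [← MeasureTheory.integrableOn_univ]
  exact MeasureTheory.IntegrableOn.mono_set ((hneg.union (hmid.union hpos))) hcover
end

section
/- For every x ∈ ℝ^d with x ≠ 0 and every t > 0, the function s ↦ p_{σ,γ}(s,x) is differentiable at t with derivative p_{σ+1,γ}(t,x); that is, ∂_t p_{σ,γ}(t,x) = p_{σ+1,γ}(t,x). -/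
open Complex MeasureTheory Filter Asymptotics

/-- `p_{σ,γ}(t,x) = 2^{2γ}·π^{-d/2}·|x|^{-d-2γ}·t^{-σ}·𝔥_{σ,γ}(2^{-2β}·|x|^{2β}·t^{-α})`. -/
noncomputable def pFun (d : ℕ) (α β γ σ ℓ : ℝ) (t : ℝ) (x : EuclideanSpace ℝ (Fin d)) : ℂ :=
  (((2 : ℝ) ^ (2 * γ) * Real.pi ^ (-(d : ℝ) / 2) * ‖x‖ ^ (-(d : ℝ) - 2 * γ) *
      t ^ (-σ) : ℝ) : ℂ) *
    hFun d α β γ σ ℓ ((2 : ℝ) ^ (-(2 * β)) * ‖x‖ ^ (2 * β) * t ^ (-α))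

namespace Stmt17

open Set

noncomputable section

/-- Gamma on a vertical line. -/
def Gl (a s : ℝ) : ℂ := Complex.Gamma ((a:ℂ) + (s:ℂ) * Complex.I)

lemma im_aux (a b : ℝ) : ((a:ℂ) + (b:ℂ)*I).im = b := by simp

lemma re_aux (a b : ℝ) : ((a:ℂ) + (b:ℂ)*I).re = a := by simp

lemma norm_le_aux (a b : ℝ) : ‖(a:ℂ) + (b:ℂ)*I‖ ≤ |a| + |b| := by
  calc ‖(a:ℂ) + (b:ℂ)*I‖ ≤ ‖(a:ℂ)‖ + ‖(b:ℂ)*I‖ := norm_add_le _ _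
  _ = |a| + |b| := by simp

lemma one_le_norm_aux (a b : ℝ) (hb : 1 ≤ |b|) : 1 ≤ ‖(a:ℂ) + (b:ℂ)*I‖ := by
  refine hb.trans ?_
  have h := Complex.abs_im_le_norm ((a:ℂ)+(b:ℂ)*I)
  rw [im_aux] at h
  simpa using h

lemma ne_zero_aux (a b : ℝ) (hb : b ≠ 0) : (a:ℂ) + (b:ℂ)*I ≠ 0 := by
  intro h
  have h2 := congrArg Complex.im h
  rw [im_aux] at h2
  simp at h2
  exact hb h2

lemma ne_neg_nat_aux {a b : ℝ} (h : 0 < a ∨ b ≠ 0) (m : ℕ) : (a:ℂ) + (b:ℂ)*I ≠ -(m:ℂ) := by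
  intro hEq
  have him := congrArg Complex.im hEq
  have hre := congrArg Complex.re hEq
  rw [im_aux] at him
  rw [re_aux] at hre
  simp at him hre
  rcases h with h | h
  · rw [hre] at h
    have : (0:ℝ) ≤ (m:ℝ) := Nat.cast_nonneg m
    linarith
  · exact h him

lemma abs_ne_zero_aux {s : ℝ} (hs : 1 ≤ |s|) : s ≠ 0 := by
  intro h; rw [h] at hs; simp at hs; linarith

lemma norm_Gl_shift_up (a s : ℝ) (hs : 1 ≤ |s|) (n : ℕ) :
    ‖Gl a s‖ ≤ ‖Gl (a + n) s‖ := by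
  induction n with
  | zero => simp
  | succ n ih =>
    have hw : ((a+n : ℝ):ℂ) + (s:ℂ)*I ≠ 0 := ne_zero_aux _ _ (abs_ne_zero_aux hs)
    have key : Gl (a + (n+1:ℕ)) s
        = (((a+n:ℝ):ℂ) + (s:ℂ)*I) * Gl (a+n) s := by
      unfold Gl
      rw [← Complex.Gamma_add_one _ hw]
      congr 1
      push_cast
      ring
    rw [key, norm_mul]
    have h1 : 1 ≤ ‖((a+n:ℝ):ℂ) + (s:ℂ)*I‖ := one_le_norm_aux _ _ hs
    calc ‖Gl a s‖ ≤ ‖Gl (a + n) s‖ := ih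
      _ ≤ _ := le_mul_of_one_le_left (norm_nonneg _) h1

lemma norm_Gl_shift_down (a s : ℝ) (hs : 1 ≤ |s|) (n : ℕ) :
    ‖Gl (a + n) s‖ ≤ ((1+|a|+n)*(1+|s|))^n * ‖Gl a s‖ := by
  induction n with
  | zero => simp
  | succ n ih =>
    have hbase : (0:ℝ) ≤ (1+|a|+n)*(1+|s|) := by positivity
    have hw : ((a+n : ℝ):ℂ) + (s:ℂ)*I ≠ 0 := ne_zero_aux _ _ (abs_ne_zero_aux hs)
    have key : Gl (a + (n+1:ℕ)) s
        = (((a+n:ℝ):ℂ) + (s:ℂ)*I) * Gl (a+n) s := by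
      unfold Gl
      rw [← Complex.Gamma_add_one _ hw]
      congr 1
      push_cast
      ring
    rw [key, norm_mul]
    have h1 : ‖((a+n:ℝ):ℂ) + (s:ℂ)*I‖ ≤ (1+|a|+(n+1:ℕ))*(1+|s|) := by
      refine (norm_le_aux _ _).trans ?_
      have h2 : |a + (n:ℝ)| ≤ |a| + n := by
        simpa [Nat.abs_cast] using abs_add_le a (n:ℝ)
      push_cast
      nlinarith [abs_nonneg s, abs_nonneg a]
    calc ‖((a+n:ℝ):ℂ) + (s:ℂ)*I‖ * ‖Gl (a+n) s‖
        ≤ ((1+|a|+(n+1:ℕ))*(1+|s|)) * (((1+|a|+n)*(1+|s|))^n * ‖Gl a s‖) := by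
          apply mul_le_mul h1 ih (by positivity) (by positivity)
      _ ≤ ((1+|a|+(n+1:ℕ))*(1+|s|)) * (((1+|a|+(n+1:ℕ))*(1+|s|))^n * ‖Gl a s‖) := by
          apply mul_le_mul_of_nonneg_left ?_ (by positivity)
          apply mul_le_mul_of_nonneg_right ?_ (norm_nonneg _)
          apply pow_le_pow_left₀ hbase
          push_cast
          nlinarith [abs_nonneg s, abs_nonneg a]
      _ = ((1+|a|+(n+1:ℕ))*(1+|s|))^(n+1) * ‖Gl a s‖ := by ring

lemma ae_ne_one : ∀ᵐ (x:ℝ), x ≠ (1:ℝ) := by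
  have h : {x : ℝ | ¬ x ≠ 1} = {1} := by ext y; simp
  rw [MeasureTheory.ae_iff, h]
  exact Real.volume_singleton

/-- Comparison of Gamma norms on a vertical line via the Beta integral. -/
lemma norm_Gl_mono (a b s : ℝ) (ha : 0 < a) (hab : a < b) :
    ‖Gl a s‖ ≤ ((∫ x in (0:ℝ)..1, x^(a-1)*(1-x)^(b-a-1)) / Real.Gamma (b-a)) * ‖Gl b s‖ := by
  set δ : ℝ := b - a with hδdef
  have hδ : 0 < δ := by simp [hδdef]; linarith
  set u : ℂ := (a:ℂ) + (s:ℂ)*I with hu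
  have hure : 0 < u.re := by simp [hu]; exact ha
  have hδre : (0:ℝ) < ((δ:ℝ):ℂ).re := by simpa using hδ
  have key := Complex.Gamma_mul_Gamma_eq_betaIntegral hure hδre
  have husum : u + ((δ:ℝ):ℂ) = (b:ℂ) + (s:ℂ)*I := by
    rw [hu]; push_cast [hδdef]; ring
  rw [husum] at key
  have hBle : ‖Complex.betaIntegral u ((δ:ℝ):ℂ)‖ ≤ ∫ x in (0:ℝ)..1, x^(a-1)*(1-x)^(b-a-1) := by
    rw [Complex.betaIntegral]
    refine (intervalIntegral.norm_integral_le_integral_norm zero_le_one).trans ?_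
    rw [intervalIntegral.integral_of_le zero_le_one, intervalIntegral.integral_of_le zero_le_one]
    apply le_of_eq
    apply MeasureTheory.setIntegral_congr_ae measurableSet_Ioc
    filter_upwards [ae_ne_one] with x hx1 hmem
    have hx0 : 0 < x := hmem.1
    have hx1' : x < 1 := lt_of_le_of_ne hmem.2 hx1
    rw [norm_mul]
    have e1 : ‖(x:ℂ) ^ (u - 1)‖ = x ^ (a-1) := by
      rw [Complex.norm_cpow_eq_rpow_re_of_pos hx0]
      congr 1
      simp [hu]
    have e2 : ‖(1 - (x:ℂ)) ^ (((δ:ℝ):ℂ) - 1)‖ = (1-x) ^ (b-a-1) := by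
      have hb : (1 - (x:ℂ)) = (((1-x:ℝ)):ℂ) := by push_cast; ring
      rw [hb, Complex.norm_cpow_eq_rpow_re_of_pos (by linarith)]
      simp [hδdef]
    rw [e1, e2]
  have hΓδ : Complex.Gamma ((δ:ℝ):ℂ) = ((Real.Gamma δ : ℝ):ℂ) := Complex.Gamma_ofReal δ
  have hΓδpos : 0 < Real.Gamma δ := Real.Gamma_pos_of_pos hδ
  have hnorm : ‖Gl a s‖ * Real.Gamma δ = ‖Gl b s‖ * ‖Complex.betaIntegral u ((δ:ℝ):ℂ)‖ := by
    have h := congrArg norm key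
    rw [norm_mul, norm_mul, hΓδ] at h
    simpa [Gl, hu, abs_of_pos hΓδpos] using h
  rw [div_mul_eq_mul_div, le_div_iff₀ hΓδpos, hnorm, mul_comm (‖Gl b s‖)]
  apply mul_le_mul_of_nonneg_right hBle (norm_nonneg _)

lemma intBeta_nonneg (a b : ℝ) : 0 ≤ ∫ x in (0:ℝ)..1, x^(a-1)*(1-x)^(b-a-1) := by
  apply intervalIntegral.integral_nonneg zero_le_one
  intro x hx
  have h1 := hx.1
  have h2 := hx.2
  have h3 : (0:ℝ) ≤ 1 - x := by linarith
  positivity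

/-- Exact decay of `Γ(1+is)`. -/
lemma norm_Gl_one (s : ℝ) (hs : 1 ≤ |s|) :
    ‖Gl 1 s‖ ≤ 4*(1+|s|)*Real.exp (-(Real.pi*|s|)/2) := by
  have hs0 : s ≠ 0 := abs_ne_zero_aux hs
  have hsI : (s:ℂ)*I ≠ 0 := by
    simp [Complex.ext_iff, hs0, Complex.I_ne_zero]
  have h1 : Gl 1 s = ((s:ℂ)*I) * Complex.Gamma ((s:ℂ)*I) := by
    unfold Gl
    rw [← Complex.Gamma_add_one _ hsI]
    congr 1; push_cast; ring
  have h2 := Complex.Gamma_mul_Gamma_one_sub ((s:ℂ)*I)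
  have h4 : (starRingEnd ℂ) (Gl 1 s) = Complex.Gamma (1 - (s:ℂ)*I) := by
    have e : (1:ℂ) - (s:ℂ)*I = (starRingEnd ℂ) (((1:ℝ):ℂ) + (s:ℂ)*I) := by
      rw [map_add, map_mul, Complex.conj_I, Complex.conj_ofReal, Complex.conj_ofReal]
      push_cast
      ring
    unfold Gl
    rw [e, Complex.Gamma_conj]
  have hsinh0 : Real.sinh (Real.pi * s) ≠ 0 := by
    rw [Real.sinh_ne_zero]
    exact mul_ne_zero Real.pi_ne_zero hs0
  have hsinhC : ((Real.sinh (Real.pi*s):ℝ):ℂ) ≠ 0 := by exact_mod_cast hsinh0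
  have hsin : Complex.sin ((Real.pi:ℂ) * ((s:ℂ)*I)) = ((Real.sinh (Real.pi*s) : ℝ):ℂ) * I := by
    have h : (Real.pi:ℂ) * ((s:ℂ)*I) = (((Real.pi*s : ℝ)):ℂ) * I := by push_cast; ring
    rw [h, Complex.sin_mul_I, Complex.ofReal_sinh]
  have hmain : (Complex.normSq (Gl 1 s) : ℂ)
      = ((Real.pi * s / Real.sinh (Real.pi*s) : ℝ) : ℂ) := by
    rw [← Complex.mul_conj (Gl 1 s), h4, h1, mul_assoc, h2, hsin]
    rw [Complex.ofReal_div]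
    rw [mul_comm ((Real.sinh (Real.pi*s):ℝ):ℂ) I]
    rw [show (s:ℂ)*I*((Real.pi:ℂ)/(I*((Real.sinh (Real.pi*s):ℝ):ℂ)))
        = (I*((s:ℂ)*(Real.pi:ℂ)))/(I*((Real.sinh (Real.pi*s):ℝ):ℂ)) from by ring]
    rw [mul_div_mul_left _ _ Complex.I_ne_zero]
    push_cast
    ring
  have hval : ‖Gl 1 s‖^2 = Real.pi * s / Real.sinh (Real.pi*s) := by
    have h := Complex.ofReal_inj.mp hmain
    rw [← h, Complex.sq_norm]
  have habs : Real.pi * s / Real.sinh (Real.pi*s)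
      = Real.pi * |s| / Real.sinh (Real.pi*|s|) := by
    rcases abs_cases s with ⟨h,_⟩ | ⟨h,_⟩
    · rw [h]
    · rw [h, mul_neg, Real.sinh_neg, neg_div_neg_eq]
  set y := Real.pi * |s| with hy
  have hy1 : 1 ≤ y := by
    have := Real.pi_gt_three
    rw [hy]; nlinarith
  have hypos : 0 < y := by linarith
  have hexp2 : (2:ℝ) ≤ Real.exp y := by
    have h := Real.add_one_le_exp y
    linarith
  have hsinh_ge : Real.exp y / 4 ≤ Real.sinh y := by
    rw [Real.sinh_eq]
    have hmul : Real.exp (-y) * Real.exp y = 1 := by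
      rw [← Real.exp_add]; simp
    have hinv : Real.exp (-y) ≤ 1/2 := by
      nlinarith [Real.exp_pos (-y)]
    linarith
  have hsinhpos : 0 < Real.sinh y := by
    have := Real.exp_pos y
    linarith
  have hstep : ‖Gl 1 s‖^2 ≤ 4*y*Real.exp (-y) := by
    rw [hval, habs, Real.exp_neg, div_le_iff₀ hsinhpos]
    have h9 : 0 < Real.exp y := Real.exp_pos y
    have hkey : 0 ≤ 4*y*(Real.exp y)⁻¹ * (Real.sinh y - Real.exp y/4) :=
      mul_nonneg (by positivity) (by linarith [hsinh_ge])
    have hcancel : (Real.exp y)⁻¹ * Real.exp y = 1 := inv_mul_cancel₀ h9.ne'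
    nlinarith [hkey, hcancel]
  have hB : 0 ≤ 4*(1+|s|)*Real.exp (-y/2) := by positivity
  have hee : Real.exp (-y/2) * Real.exp (-y/2) = Real.exp (-y) := by
    rw [← Real.exp_add]; ring_nf
  have hsq : ‖Gl 1 s‖^2 ≤ (4*(1+|s|)*Real.exp (-y/2))^2 := by
    refine hstep.trans ?_
    have h1' : 4*y ≤ 16*(1+|s|)^2 := by
      have h4pi : Real.pi ≤ 4 := by linarith [Real.pi_le_four]
      rw [hy]
      nlinarith [abs_nonneg s]
    calc 4*y*Real.exp (-y) = (4*y)*(Real.exp (-y/2)*Real.exp (-y/2)) := by rw [hee]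
      _ ≤ (16*(1+|s|)^2)*(Real.exp (-y/2)*Real.exp (-y/2)) := by
          apply mul_le_mul_of_nonneg_right h1' (by positivity)
      _ = (4*(1+|s|)*Real.exp (-y/2))^2 := by ring
  have hfin := Real.sqrt_le_sqrt hsq
  rwa [Real.sqrt_sq (norm_nonneg _), Real.sqrt_sq hB] at hfin

/-- Decay of Gamma along any vertical line. -/
lemma gamma_decay (a : ℝ) : ∃ C : ℝ, 0 ≤ C ∧ ∃ k : ℕ, ∀ s : ℝ, 1 ≤ |s| →
    ‖Gl a s‖ ≤ C * (1+|s|)^k * Real.exp (-(Real.pi*|s|)/2) := by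
  set n : ℕ := ⌈|a|⌉₊ + 2 with hn
  set b : ℝ := a + n with hbdef
  have hceil : |a| ≤ (⌈|a|⌉₊ : ℝ) := Nat.le_ceil _
  have hb2 : 2 ≤ b := by
    rw [hbdef, hn]
    push_cast
    have := neg_abs_le a
    linarith
  have hb0 : 0 ≤ b := by linarith
  have hceilb : 2 ≤ ⌈b⌉₊ := by
    exact_mod_cast hb2.trans (Nat.le_ceil b)
  set m : ℕ := ⌈b⌉₊ - 2 with hm
  have hmr : (m:ℝ) = (⌈b⌉₊:ℝ) - 2 := by
    rw [hm]
    push_cast [Nat.cast_sub hceilb]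
    ring
  set b' : ℝ := b - m with hb'def
  have hceil_lt : (⌈b⌉₊ : ℝ) < b + 1 := Nat.ceil_lt_add_one hb0
  have hceil_ge : b ≤ (⌈b⌉₊ : ℝ) := Nat.le_ceil b
  have hb'1 : 1 < b' := by rw [hb'def, hmr]; linarith
  have hb'2 : b' ≤ 2 := by rw [hb'def, hmr]; linarith
  have hbm : b' + (m:ℝ) = a + (n:ℝ) := by rw [hb'def, hbdef]; ring
  set Cβ : ℝ := (∫ x in (0:ℝ)..1, x^(b'-1)*(1-x)^(3-b'-1)) / Real.Gamma (3-b') with hCβ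
  have hCβ0 : 0 ≤ Cβ := by
    rw [hCβ]
    apply div_nonneg (intBeta_nonneg b' 3)
    exact (Real.Gamma_pos_of_pos (by linarith)).le
  refine ⟨((3+m)^m * Cβ * 8), by positivity, m + 3, fun s hs => ?_⟩
  have hs0 : s ≠ 0 := abs_ne_zero_aux hs
  have hsnn : 0 ≤ |s| := abs_nonneg s
  have c1 : ‖Gl a s‖ ≤ ‖Gl (b' + m) s‖ := by
    rw [show b' + (m:ℝ) = a + (n:ℝ) from hbm]
    exact norm_Gl_shift_up a s hs n
  have c2 : ‖Gl (b' + m) s‖ ≤ ((1+|b'|+m)*(1+|s|))^m * ‖Gl b' s‖ :=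
    norm_Gl_shift_down b' s hs m
  have c2' : ((1+|b'|+m)*(1+|s|))^m ≤ ((3+m)*(1+|s|))^m := by
    apply pow_le_pow_left₀ (by positivity)
    apply mul_le_mul_of_nonneg_right ?_ (by positivity)
    have hb'abs : |b'| ≤ 2 := by
      rw [abs_of_pos (by linarith : (0:ℝ) < b')]; exact hb'2
    linarith
  have c3 : ‖Gl b' s‖ ≤ Cβ * ‖Gl 3 s‖ := by
    have h := norm_Gl_mono b' 3 s (by linarith) (by linarith)
    rw [hCβ]
    exact h
  have e32 : Gl 3 s = (((2:ℝ):ℂ) + (s:ℂ)*I) * Gl 2 s := by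
    unfold Gl
    rw [← Complex.Gamma_add_one _ (ne_zero_aux 2 s hs0)]
    congr 1; push_cast; ring
  have e21 : Gl 2 s = (((1:ℝ):ℂ) + (s:ℂ)*I) * Gl 1 s := by
    unfold Gl
    rw [← Complex.Gamma_add_one _ (ne_zero_aux 1 s hs0)]
    congr 1; push_cast; ring
  have c4 : ‖Gl 3 s‖ ≤ (2*(1+|s|)) * ((1+|s|) * ‖Gl 1 s‖) := by
    rw [e32, e21, norm_mul, norm_mul]
    have h2b : ‖((2:ℝ):ℂ) + (s:ℂ)*I‖ ≤ 2*(1+|s|) := by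
      refine (norm_le_aux 2 s).trans ?_
      rw [abs_of_pos (by norm_num : (0:ℝ) < 2)]
      linarith
    have h1b : ‖((1:ℝ):ℂ) + (s:ℂ)*I‖ ≤ 1+|s| := by
      refine (norm_le_aux 1 s).trans (le_of_eq ?_)
      rw [abs_of_pos one_pos]
    apply mul_le_mul h2b (mul_le_mul h1b le_rfl (norm_nonneg _) (by positivity))
      (by positivity) (by positivity)
  have c5 := norm_Gl_one s hs
  calc ‖Gl a s‖ ≤ ((1+|b'|+m)*(1+|s|))^m * ‖Gl b' s‖ := c1.trans c2
    _ ≤ ((3+m)*(1+|s|))^m * (Cβ * ‖Gl 3 s‖) := by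
        apply mul_le_mul c2' c3 (norm_nonneg _) (by positivity)
    _ ≤ ((3+m)*(1+|s|))^m * (Cβ * ((2*(1+|s|)) * ((1+|s|) * (4*(1+|s|)*Real.exp (-(Real.pi*|s|)/2))))) := by
        apply mul_le_mul_of_nonneg_left ?_ (by positivity)
        apply mul_le_mul_of_nonneg_left ?_ hCβ0
        calc ‖Gl 3 s‖ ≤ (2*(1+|s|)) * ((1+|s|) * ‖Gl 1 s‖) := c4
          _ ≤ _ := by
            apply mul_le_mul_of_nonneg_left ?_ (by positivity)
            apply mul_le_mul_of_nonneg_left c5 (by positivity)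
    _ = ((3+m)^m * Cβ * 8) * ((1+|s|)^m * (1+|s|)^3) * Real.exp (-(Real.pi*|s|)/2) := by
        rw [mul_pow]
        ring
    _ = ((3+m)^m * Cβ * 8) * (1+|s|)^(m+3) * Real.exp (-(Real.pi*|s|)/2) := by
        rw [pow_add]

/-- Norm bound for complex sine. -/
lemma norm_sin_le (w : ℂ) : ‖Complex.sin w‖ ≤ Real.exp |w.im| := by
  rw [Complex.sin_eq]
  refine (norm_add_le _ _).trans ?_
  rw [norm_mul, norm_mul, norm_mul]
  rw [← Complex.ofReal_sin, ← Complex.ofReal_cos, ← Complex.ofReal_sinh, ← Complex.ofReal_cosh]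
  simp only [Complex.norm_real, Complex.norm_I, mul_one, Real.norm_eq_abs]
  have h1 : |Real.sin w.re| ≤ 1 := Real.abs_sin_le_one _
  have h2 : |Real.cos w.re| ≤ 1 := Real.abs_cos_le_one _
  have h3 : |Real.cosh w.im| = Real.cosh |w.im| := by
    rw [abs_of_pos (Real.cosh_pos _), Real.cosh_abs]
  have h4 : |Real.sinh w.im| = Real.sinh |w.im| := Real.abs_sinh _
  have h5 : Real.cosh |w.im| + Real.sinh |w.im| = Real.exp |w.im| := Real.cosh_add_sinh _
  have h6 : 0 ≤ Real.sinh |w.im| := by rw [← h4]; exact abs_nonneg _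
  have h7 : 0 < Real.cosh |w.im| := Real.cosh_pos _
  nlinarith [abs_nonneg (Real.cosh w.im), abs_nonneg (Real.sinh w.im)]

/-- Growth bound for the reciprocal Gamma along vertical lines. -/
lemma inv_gamma_growth (b : ℝ) : ∃ C : ℝ, 0 ≤ C ∧ ∃ k : ℕ, ∀ s : ℝ, 1 ≤ |s| →
    ‖(Gl b s)⁻¹‖ ≤ C * (1+|s|)^k * Real.exp (Real.pi*|s|/2) := by
  obtain ⟨C, hC, k, hCk⟩ := gamma_decay (1-b)
  refine ⟨C/Real.pi, by positivity, k, fun s hs => ?_⟩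
  have hs0 : s ≠ 0 := abs_ne_zero_aux hs
  set w : ℂ := (b:ℂ) + (s:ℂ)*I with hw
  have hΓ : Complex.Gamma w ≠ 0 := by
    apply Complex.Gamma_ne_zero
    intro m hEq
    have h := congrArg Complex.im hEq
    simp [hw] at h
    exact hs0 h
  have hsin0 : Complex.sin ((Real.pi:ℂ)*w) ≠ 0 := by
    intro h
    rw [Complex.sin_eq_zero_iff] at h
    obtain ⟨kk, hkk⟩ := h
    have h2 := congrArg Complex.im hkk
    simp [hw] at h2
    exact hs0 h2
  have refl1 := Complex.Gamma_mul_Gamma_one_sub w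
  rw [eq_div_iff hsin0] at refl1
  have hπC : ((Real.pi:ℝ):ℂ) ≠ 0 := by exact_mod_cast Real.pi_ne_zero
  have hinv : (Complex.Gamma w)⁻¹
      = Complex.Gamma (1-w) * Complex.sin ((Real.pi:ℂ)*w) / (Real.pi:ℂ) := by
    have hone : Complex.Gamma w * (Complex.Gamma (1-w) * Complex.sin ((Real.pi:ℂ)*w) / (Real.pi:ℂ)) = 1 := by
      rw [mul_comm (Complex.Gamma w), div_mul_eq_mul_div, div_eq_one_iff_eq hπC]
      linear_combination refl1
    exact inv_eq_of_mul_eq_one_right hone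
  have hGl : (Gl b s)⁻¹ = Complex.Gamma (1-w) * Complex.sin ((Real.pi:ℂ)*w) / (Real.pi:ℂ) := hinv
  have h1w : Complex.Gamma (1-w) = Gl (1-b) (-s) := by
    unfold Gl
    congr 1
    rw [hw]; push_cast; ring
  have hgd : ‖Gl (1-b) (-s)‖ ≤ C * (1+|s|)^k * Real.exp (-(Real.pi*|s|)/2) := by
    have h := hCk (-s) (by rwa [abs_neg])
    rwa [abs_neg] at h
  have hsinb : ‖Complex.sin ((Real.pi:ℂ)*w)‖ ≤ Real.exp (Real.pi*|s|) := by
    refine (norm_sin_le _).trans ?_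
    apply Real.exp_le_exp.mpr
    have him : ((Real.pi:ℂ)*w).im = Real.pi * s := by
      rw [hw]; simp
    rw [him, abs_mul, abs_of_pos Real.pi_pos]
  rw [hGl, norm_div, norm_mul, h1w]
  have hπn : ‖((Real.pi:ℝ):ℂ)‖ = Real.pi := by
    simp [abs_of_pos Real.pi_pos]
  rw [hπn, div_le_iff₀ Real.pi_pos]
  have hmul := mul_le_mul hgd hsinb (norm_nonneg _) (by positivity)
  refine hmul.trans (le_of_eq ?_)
  rw [mul_assoc, ← Real.exp_add,
    show -(Real.pi*|s|)/2 + Real.pi*|s| = Real.pi*|s|/2 from by ring]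
  field_simp


lemma poly_le_exp (K : ℕ) (ε : ℝ) (hε : 0 < ε) :
    ∃ M : ℝ, 0 ≤ M ∧ ∀ u : ℝ, 0 ≤ u → (1+u)^K ≤ M * Real.exp (ε*u) := by
  set δ := min 1 (ε/(K+1)) with hδ
  have hδ0 : 0 < δ := lt_min one_pos (by positivity)
  have hδ1 : δ ≤ 1 := min_le_left _ _
  refine ⟨(1/δ)^K, by positivity, fun u hu => ?_⟩
  have h3 : 1 ≤ 1/δ := by rw [le_div_iff₀ hδ0]; linarith
  have h1 : 1 + u ≤ (1/δ) * Real.exp (δ*u) := by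
    have h2 : 1 + δ*u ≤ Real.exp (δ*u) := by linarith [Real.add_one_le_exp (δ*u)]
    calc 1 + u ≤ 1/δ + u := by linarith
      _ = (1/δ)*(1 + δ*u) := by field_simp
      _ ≤ (1/δ)*Real.exp (δ*u) := by
          apply mul_le_mul_of_nonneg_left h2 (by positivity)
  have hKδ : (K:ℝ)*δ ≤ ε := by
    have hδ2 : δ ≤ ε/(K+1) := min_le_right _ _
    have hK1 : (0:ℝ) < (K:ℝ)+1 := by positivity
    rw [le_div_iff₀ hK1] at hδ2
    nlinarith [Nat.cast_nonneg (α := ℝ) K, hδ0.le]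
  calc (1+u)^K ≤ ((1/δ) * Real.exp (δ*u))^K := by
        apply pow_le_pow_left₀ (by linarith) h1
    _ = (1/δ)^K * (Real.exp (δ*u))^K := mul_pow _ _ _
    _ = (1/δ)^K * Real.exp ((K:ℝ)*(δ*u)) := by rw [← Real.exp_nat_mul]
    _ ≤ (1/δ)^K * Real.exp (ε*u) := by
        apply mul_le_mul_of_nonneg_left ?_ (by positivity)
        apply Real.exp_le_exp.mpr
        rw [← mul_assoc]
        exact mul_le_mul_of_nonneg_right hKδ hu

lemma integrable_of_decay (g : ℝ → ℝ) (hg : Continuous g) (C c T : ℝ) (hc : 0 < c)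
    (h : ∀ t : ℝ, T ≤ |t| → ‖g t‖ ≤ C * Real.exp (-c * |t|)) : Integrable g := by
  set T' := max T 0 with hT'
  have hT'0 : 0 ≤ T' := le_max_right _ _
  have hTT' : T ≤ T' := le_max_left _ _
  have hIoi : IntegrableOn g (Ioi T') := by
    apply Integrable.mono' ((exp_neg_integrableOn_Ioi T' hc).const_mul C)
    · exact hg.aestronglyMeasurable.restrict
    · refine (ae_restrict_iff' measurableSet_Ioi).mpr (Filter.Eventually.of_forall fun t ht => ?_)
      have ht' : T' < t := ht
      have habs : |t| = t := abs_of_nonneg (by linarith)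
      have h1 : T ≤ |t| := by rw [habs]; linarith
      have h2 := h t h1
      rwa [habs] at h2
  have hIci : IntegrableOn (fun t => g (-t)) (Ici T') := by
    rw [integrableOn_Ici_iff_integrableOn_Ioi]
    apply Integrable.mono' ((exp_neg_integrableOn_Ioi T' hc).const_mul C)
    · exact (hg.comp continuous_neg).aestronglyMeasurable.restrict
    · refine (ae_restrict_iff' measurableSet_Ioi).mpr (Filter.Eventually.of_forall fun t ht => ?_)
      have ht' : T' < t := ht
      have habs : |(-t)| = t := by rw [abs_neg]; exact abs_of_nonneg (by linarith)
      have h1 : T ≤ |(-t)| := by rw [habs]; linarith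
      have h2 := h (-t) h1
      rwa [habs] at h2
  have hIic : IntegrableOn g (Iic (-T')) := by
    have hiff := (MeasurePreserving.integrableOn_comp_preimage
      (Measure.measurePreserving_neg (volume : Measure ℝ))
      (Homeomorph.neg ℝ).measurableEmbedding (f := g) (s := Iic (-T')))
    rw [← hiff]
    have hset : (Neg.neg ⁻¹' (Iic (-T')) : Set ℝ) = Ici T' := by
      ext u
      simp
    rw [hset]
    exact hIci
  have hIcc : IntegrableOn g (Icc (-T') T') := hg.integrableOn_Icc
  rw [← integrableOn_univ]
  have huniv : (univ : Set ℝ) = Iic (-T') ∪ (Icc (-T') T' ∪ Ioi T') := by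
    ext u
    simp only [mem_univ, mem_union, mem_Iic, mem_Icc, mem_Ioi, true_iff]
    rcases le_total u (-T') with h1 | h1
    · exact Or.inl h1
    · rcases le_or_gt u T' with h2 | h2
      · exact Or.inr (Or.inl ⟨h1, h2⟩)
      · exact Or.inr (Or.inr h2)
  rw [huniv]
  exact hIic.union (hIcc.union hIoi)


/-- Decomposition of HFun on the vertical line. -/
lemma HFun_decomp (d : ℕ) (α β γ σ ℓ t : ℝ) :
    HFun d α β γ σ ((ℓ:ℂ) + (t:ℂ)*I)
      = Gl ((d:ℝ)/2+γ+β*ℓ) (β*t) * Gl (1+ℓ) t * Gl (-ℓ) (-t)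
        * ((Gl (-γ-β*ℓ) (-(β*t)))⁻¹ * (Gl (1-σ+α*ℓ) (α*t))⁻¹) := by
  have e1 : (d:ℂ)/2 + (γ:ℂ) + (β:ℂ)*((ℓ:ℂ)+(t:ℂ)*I)
      = (((d:ℝ)/2+γ+β*ℓ : ℝ):ℂ) + ((β*t : ℝ):ℂ)*I := by push_cast; ring
  have e2 : (1:ℂ) + ((ℓ:ℂ)+(t:ℂ)*I) = ((1+ℓ : ℝ):ℂ) + ((t:ℝ):ℂ)*I := by push_cast; ring
  have e3 : -((ℓ:ℂ)+(t:ℂ)*I) = ((-ℓ : ℝ):ℂ) + ((-t:ℝ):ℂ)*I := by push_cast; ring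
  have e4 : -(γ:ℂ) - (β:ℂ)*((ℓ:ℂ)+(t:ℂ)*I) = ((-γ-β*ℓ : ℝ):ℂ) + ((-(β*t):ℝ):ℂ)*I := by
    push_cast; ring
  have e5 : (1:ℂ) - (σ:ℂ) + (α:ℂ)*((ℓ:ℂ)+(t:ℂ)*I) = ((1-σ+α*ℓ : ℝ):ℂ) + ((α*t:ℝ):ℂ)*I := by
    push_cast; ring
  unfold HFun Gl
  rw [e1, e2, e3, e4, e5, div_eq_mul_inv, mul_inv]

/-- Exponential decay bound for the weighted HFun along the contour. -/
lemma HFun_line_bound (d : ℕ) (α β γ σ ℓ : ℝ) (hα : 0 < α) (hα2 : α < 2) (hβ : 0 < β) :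
    ∃ C : ℝ, 0 ≤ C ∧ ∃ T : ℝ, 1 ≤ T ∧ ∀ t : ℝ, T ≤ |t| →
      (1+|t|) * ‖HFun d α β γ σ ((ℓ:ℂ) + (t:ℂ)*I)‖
        ≤ C * Real.exp (-(Real.pi*(2-α)/4) * |t|) := by
  obtain ⟨C1, hC1, k1, h1⟩ := gamma_decay ((d:ℝ)/2+γ+β*ℓ)
  obtain ⟨C2, hC2, k2, h2⟩ := gamma_decay (1+ℓ)
  obtain ⟨C3, hC3, k3, h3⟩ := gamma_decay (-ℓ)
  obtain ⟨C4, hC4, k4, h4⟩ := inv_gamma_growth (-γ-β*ℓ)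
  obtain ⟨C5, hC5, k5, h5⟩ := inv_gamma_growth (1-σ+α*ℓ)
  have hε : 0 < Real.pi*(2-α)/4 := by
    have := Real.pi_pos
    nlinarith
  obtain ⟨M, hM, hMle⟩ := poly_le_exp (k1+k2+k3+k4+k5+1) (Real.pi*(2-α)/4) hε
  refine ⟨C1*C2*C3*C4*C5*(1+β)^k1*(1+β)^k4*(1+α)^k5*M, by positivity,
    max 1 (max (1/β) (1/α)), le_max_left _ _, fun t ht => ?_⟩
  set u := |t| with hu
  have hu0 : 0 ≤ u := abs_nonneg t
  have hu1 : 1 ≤ u := le_trans (le_max_left _ _) ht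
  have hβu : 1 ≤ β*u := by
    have h := le_trans (le_trans (le_max_left _ _) (le_max_right 1 _)) ht
    rw [div_le_iff₀ hβ] at h
    linarith [mul_comm u β]
  have hαu : 1 ≤ α*u := by
    have h := le_trans (le_trans (le_max_right _ _) (le_max_right 1 _)) ht
    rw [div_le_iff₀ hα] at h
    linarith [mul_comm u α]
  have habsβ : |β*t| = β*u := by rw [abs_mul, abs_of_pos hβ, hu]
  have habsβ' : |(-(β*t))| = β*u := by rw [abs_neg]; exact habsβ
  have habsα : |α*t| = α*u := by rw [abs_mul, abs_of_pos hα, hu]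
  have habsneg : |(-t)| = u := by rw [abs_neg, hu]
  -- individual bounds
  have b1 : ‖Gl ((d:ℝ)/2+γ+β*ℓ) (β*t)‖
      ≤ C1*((1+β)*(1+u))^k1 * Real.exp (-(Real.pi*(β*u))/2) := by
    have h := h1 (β*t) (by rw [habsβ]; exact hβu)
    rw [habsβ] at h
    refine h.trans ?_
    apply mul_le_mul_of_nonneg_right ?_ (Real.exp_pos _).le
    apply mul_le_mul_of_nonneg_left ?_ hC1
    apply pow_le_pow_left₀ (by positivity)
    nlinarith
  have b2 : ‖Gl (1+ℓ) t‖ ≤ C2*(1+u)^k2 * Real.exp (-(Real.pi*u)/2) := by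
    have h := h2 t hu1
    rwa [← hu] at h
  have b3 : ‖Gl (-ℓ) (-t)‖ ≤ C3*(1+u)^k3 * Real.exp (-(Real.pi*u)/2) := by
    have h := h3 (-t) (by rw [habsneg]; exact hu1)
    rwa [habsneg] at h
  have b4 : ‖(Gl (-γ-β*ℓ) (-(β*t)))⁻¹‖
      ≤ C4*((1+β)*(1+u))^k4 * Real.exp (Real.pi*(β*u)/2) := by
    have h := h4 (-(β*t)) (by rw [habsβ']; exact hβu)
    rw [habsβ'] at h
    refine h.trans ?_
    apply mul_le_mul_of_nonneg_right ?_ (Real.exp_pos _).le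
    apply mul_le_mul_of_nonneg_left ?_ hC4
    apply pow_le_pow_left₀ (by positivity)
    nlinarith
  have b5 : ‖(Gl (1-σ+α*ℓ) (α*t))⁻¹‖
      ≤ C5*((1+α)*(1+u))^k5 * Real.exp (Real.pi*(α*u)/2) := by
    have h := h5 (α*t) (by rw [habsα]; exact hαu)
    rw [habsα] at h
    refine h.trans ?_
    apply mul_le_mul_of_nonneg_right ?_ (Real.exp_pos _).le
    apply mul_le_mul_of_nonneg_left ?_ hC5
    apply pow_le_pow_left₀ (by positivity)
    nlinarith
  -- combine
  rw [HFun_decomp]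
  simp only [norm_mul]
  have hcomb : (1+u) * (‖Gl ((d:ℝ)/2+γ+β*ℓ) (β*t)‖ * ‖Gl (1+ℓ) t‖ * ‖Gl (-ℓ) (-t)‖
      * (‖(Gl (-γ-β*ℓ) (-(β*t)))⁻¹‖ * ‖(Gl (1-σ+α*ℓ) (α*t))⁻¹‖))
      ≤ (1+u) * ((C1*((1+β)*(1+u))^k1 * Real.exp (-(Real.pi*(β*u))/2))
        * (C2*(1+u)^k2 * Real.exp (-(Real.pi*u)/2))
        * (C3*(1+u)^k3 * Real.exp (-(Real.pi*u)/2))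
        * ((C4*((1+β)*(1+u))^k4 * Real.exp (Real.pi*(β*u)/2))
          * (C5*((1+α)*(1+u))^k5 * Real.exp (Real.pi*(α*u)/2)))) := by
    gcongr <;> first
      | exact b1 | exact b2 | exact b3 | exact b4 | exact b5
      | positivity
  refine hcomb.trans ?_
  have hexpcomb : Real.exp (-(Real.pi*(β*u))/2) * Real.exp (-(Real.pi*u)/2)
      * Real.exp (-(Real.pi*u)/2) * Real.exp (Real.pi*(β*u)/2) * Real.exp (Real.pi*(α*u)/2)
      = Real.exp (-(Real.pi*(2-α)/2) * u) := by
    rw [← Real.exp_add, ← Real.exp_add, ← Real.exp_add, ← Real.exp_add]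
    congr 1
    ring
  have hfinal : (1+u) * ((C1*((1+β)*(1+u))^k1 * Real.exp (-(Real.pi*(β*u))/2))
        * (C2*(1+u)^k2 * Real.exp (-(Real.pi*u)/2))
        * (C3*(1+u)^k3 * Real.exp (-(Real.pi*u)/2))
        * ((C4*((1+β)*(1+u))^k4 * Real.exp (Real.pi*(β*u)/2))
          * (C5*((1+α)*(1+u))^k5 * Real.exp (Real.pi*(α*u)/2))))
      = (C1*C2*C3*C4*C5*(1+β)^k1*(1+β)^k4*(1+α)^k5)
        * (1+u)^(k1+k2+k3+k4+k5+1) * Real.exp (-(Real.pi*(2-α)/2) * u) := by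
    rw [← hexpcomb]
    simp only [mul_pow, pow_add, pow_one]
    ring
  rw [hfinal]
  have hpoly := hMle u hu0
  calc (C1*C2*C3*C4*C5*(1+β)^k1*(1+β)^k4*(1+α)^k5)
        * (1+u)^(k1+k2+k3+k4+k5+1) * Real.exp (-(Real.pi*(2-α)/2) * u)
      ≤ (C1*C2*C3*C4*C5*(1+β)^k1*(1+β)^k4*(1+α)^k5)
        * (M * Real.exp ((Real.pi*(2-α)/4)*u)) * Real.exp (-(Real.pi*(2-α)/2) * u) := by
        apply mul_le_mul_of_nonneg_right ?_ (Real.exp_pos _).le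
        apply mul_le_mul_of_nonneg_left hpoly (by positivity)
    _ = (C1*C2*C3*C4*C5*(1+β)^k1*(1+β)^k4*(1+α)^k5*M)
        * (Real.exp ((Real.pi*(2-α)/4)*u) * Real.exp (-(Real.pi*(2-α)/2) * u)) := by ring
    _ = (C1*C2*C3*C4*C5*(1+β)^k1*(1+β)^k4*(1+α)^k5*M)
        * Real.exp (-(Real.pi*(2-α)/4) * u) := by
        rw [← Real.exp_add]
        congr 2
        ring


/-- Continuity of HFun along the contour. -/
lemma continuous_HFun_line (d : ℕ) (α β γ σ ℓ : ℝ)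
    (hA : 0 < (d:ℝ)/2+γ+β*ℓ) (h1ℓ : 0 < 1+ℓ) (h2ℓ : 0 < -ℓ) :
    Continuous (fun t : ℝ => HFun d α β γ σ ((ℓ:ℂ) + (t:ℂ)*I)) := by
  have hfun : (fun t : ℝ => HFun d α β γ σ ((ℓ:ℂ) + (t:ℂ)*I))
      = fun t : ℝ =>
        (Complex.Gamma ((d:ℂ)/2+(γ:ℂ)+(β:ℂ)*((ℓ:ℂ)+(t:ℂ)*I))
          * Complex.Gamma (1+((ℓ:ℂ)+(t:ℂ)*I)) * Complex.Gamma (-((ℓ:ℂ)+(t:ℂ)*I)))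
        * ((Complex.Gamma (-(γ:ℂ)-(β:ℂ)*((ℓ:ℂ)+(t:ℂ)*I)))⁻¹
          * (Complex.Gamma (1-(σ:ℂ)+(α:ℂ)*((ℓ:ℂ)+(t:ℂ)*I)))⁻¹) := by
    funext t
    rw [HFun, div_eq_mul_inv, mul_inv]
  rw [hfun]
  have hc1 : Continuous (fun t : ℝ => Complex.Gamma ((d:ℂ)/2+(γ:ℂ)+(β:ℂ)*((ℓ:ℂ)+(t:ℂ)*I))) := by
    rw [continuous_iff_continuousAt]
    intro t
    have harg : ContinuousAt (fun t : ℝ => (d:ℂ)/2+(γ:ℂ)+(β:ℂ)*((ℓ:ℂ)+(t:ℂ)*I)) t := by fun_prop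
    refine (Complex.differentiableAt_Gamma _ ?_).continuousAt.comp harg
    intro m
    rw [show (d:ℂ)/2+(γ:ℂ)+(β:ℂ)*((ℓ:ℂ)+(t:ℂ)*I)
        = (((d:ℝ)/2+γ+β*ℓ:ℝ):ℂ)+((β*t:ℝ):ℂ)*I from by push_cast; ring]
    exact ne_neg_nat_aux (Or.inl hA) m
  have hc2 : Continuous (fun t : ℝ => Complex.Gamma (1+((ℓ:ℂ)+(t:ℂ)*I))) := by
    rw [continuous_iff_continuousAt]
    intro t
    have harg : ContinuousAt (fun t : ℝ => (1:ℂ)+((ℓ:ℂ)+(t:ℂ)*I)) t := by fun_prop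
    refine (Complex.differentiableAt_Gamma _ ?_).continuousAt.comp harg
    intro m
    rw [show (1:ℂ)+((ℓ:ℂ)+(t:ℂ)*I) = ((1+ℓ:ℝ):ℂ)+((t:ℝ):ℂ)*I from by push_cast; ring]
    exact ne_neg_nat_aux (Or.inl h1ℓ) m
  have hc3 : Continuous (fun t : ℝ => Complex.Gamma (-((ℓ:ℂ)+(t:ℂ)*I))) := by
    rw [continuous_iff_continuousAt]
    intro t
    have harg : ContinuousAt (fun t : ℝ => -((ℓ:ℂ)+(t:ℂ)*I)) t := by fun_prop
    refine (Complex.differentiableAt_Gamma _ ?_).continuousAt.comp harg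
    intro m
    rw [show -((ℓ:ℂ)+(t:ℂ)*I) = ((-ℓ:ℝ):ℂ)+((-t:ℝ):ℂ)*I from by push_cast; ring]
    exact ne_neg_nat_aux (Or.inl h2ℓ) m
  have hc4 : Continuous (fun t : ℝ => (Complex.Gamma (-(γ:ℂ)-(β:ℂ)*((ℓ:ℂ)+(t:ℂ)*I)))⁻¹) := by
    exact Complex.differentiable_one_div_Gamma.continuous.comp (by fun_prop)
  have hc5 : Continuous (fun t : ℝ => (Complex.Gamma (1-(σ:ℂ)+(α:ℂ)*((ℓ:ℂ)+(t:ℂ)*I)))⁻¹) := by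
    exact Complex.differentiable_one_div_Gamma.continuous.comp (by fun_prop)
  exact ((hc1.mul hc2).mul hc3).mul (hc4.mul hc5)

lemma continuous_mellin_line (d : ℕ) (α β γ σ ℓ : ℝ)
    (hA : 0 < (d:ℝ)/2+γ+β*ℓ) (h1ℓ : 0 < 1+ℓ) (h2ℓ : 0 < -ℓ) (r : ℝ) :
    Continuous (fun t : ℝ => mellinKernel d α β γ σ ℓ r t) := by
  have h1 := continuous_HFun_line d α β γ σ ℓ hA h1ℓ h2ℓ
  have h2 : Continuous (fun t : ℝ =>
      Complex.exp (-((ℓ:ℂ) + (t:ℂ)*I) * (Real.log r : ℂ))) := by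
    apply Complex.continuous_exp.comp
    fun_prop
  exact h1.mul h2

lemma HFun_succ (d : ℕ) (α β γ σ : ℝ) (w : ℂ) (hw : (α:ℂ)*w - (σ:ℂ) ≠ 0) :
    HFun d α β γ (σ+1) w = ((α:ℂ)*w - (σ:ℂ)) * HFun d α β γ σ w := by
  unfold HFun
  rw [show (1:ℂ) - ((σ+1:ℝ):ℂ) + (α:ℂ)*w = (α:ℂ)*w - (σ:ℂ) from by push_cast; ring]
  rw [show (1:ℂ) - (σ:ℂ) + (α:ℂ)*w = ((α:ℂ)*w - (σ:ℂ)) + 1 from by ring]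
  rw [Complex.Gamma_add_one _ hw]
  rcases eq_or_ne (Complex.Gamma ((α:ℂ)*w - (σ:ℂ))) 0 with h|h
  · simp [h]
  · rcases eq_or_ne (Complex.Gamma (-(γ:ℂ)-(β:ℂ)*w)) 0 with h2|h2
    · simp [h2]
    · generalize Complex.Gamma ((α:ℂ)*w - (σ:ℂ)) = G at h ⊢
      generalize (α:ℂ)*w - (σ:ℂ) = x at hw ⊢
      field_simp

lemma ae_ne_zero : ∀ᵐ (u:ℝ), u ≠ (0:ℝ) := by
  have h : {u : ℝ | ¬ u ≠ 0} = {0} := by ext y; simp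
  rw [MeasureTheory.ae_iff, h]
  exact Real.volume_singleton


end

end Stmt17

set_option maxHeartbeats 1000000 in
open Stmt17 Metric in
/-- for every `x ≠ 0` and every `t > 0`, the map `s ↦ p_{σ,γ}(s,x)` is
differentiable at `t` with derivative `p_{σ+1,γ}(t,x)`. -/
theorem stmt17 (d : ℕ) (hd : 1 ≤ d) (α β γ σ : ℝ) (hα : 0 < α) (hα2 : α < 2)
    (hβ : 0 < β) (hγ : 0 ≤ γ) (ℓ : ℝ)
    (hℓ1 : max (-1 : ℝ) (-((d : ℝ) + 2 * γ) / (2 * β)) < ℓ) (hℓ2 : ℓ < 0) :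
    ∀ (x : EuclideanSpace ℝ (Fin d)), x ≠ 0 → ∀ t : ℝ, 0 < t →
      HasDerivAt (fun s : ℝ => pFun d α β γ σ ℓ s x) (pFun d α β γ (σ + 1) ℓ t x) t := by
  obtain ⟨hℓa, hℓb⟩ := max_lt_iff.mp hℓ1
  have h2β : (0:ℝ) < 2*β := by linarith
  rw [div_lt_iff₀ h2β] at hℓb
  have hA : 0 < (d:ℝ)/2+γ+β*ℓ := by nlinarith
  have h1ℓ : 0 < 1+ℓ := by linarith
  have h2ℓ : 0 < -ℓ := by linarith
  intro x hx t₀ ht₀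
  have hx0 : 0 < ‖x‖ := norm_pos_iff.mpr hx
  set c : ℝ := (2:ℝ)^(-(2*β)) * ‖x‖^(2*β) with hc
  have hcpos : 0 < c := by
    rw [hc]
    positivity
  set lc : ℝ := Real.log c with hlc
  -- integrability of the dominating function
  obtain ⟨CH, hCH, T, hT1, hHb⟩ := HFun_line_bound d α β γ σ ℓ hα hα2 hβ
  have hHcont := continuous_HFun_line d α β γ σ ℓ hA h1ℓ h2ℓ
  set gN : ℝ → ℝ := fun u => (1+|u|) * ‖HFun d α β γ σ ((ℓ:ℂ)+(u:ℂ)*I)‖ with hgN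
  have hgNcont : Continuous gN := ((continuous_const.add _root_.continuous_abs).mul hHcont.norm)
  have hεdecay : 0 < Real.pi*(2-α)/4 := by
    have := Real.pi_pos
    nlinarith
  have hgNint : Integrable gN := by
    apply integrable_of_decay gN hgNcont CH (Real.pi*(2-α)/4) T hεdecay
    intro t hTt
    have h := hHb t hTt
    have hnn : 0 ≤ gN t := by
      rw [hgN]
      positivity
    rw [Real.norm_eq_abs, _root_.abs_of_nonneg hnn]
    exact h
  -- logarithm bound on the ball
  set L : ℝ := max |Real.log (t₀/2)| |Real.log (2*t₀)| with hL
  have hball : ∀ s ∈ ball t₀ (t₀/2), t₀/2 < s ∧ s < 2*t₀ := by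
    intro s hs
    rw [mem_ball, Real.dist_eq] at hs
    obtain ⟨h1, h2⟩ := abs_lt.mp hs
    constructor <;> linarith
  have hlogL : ∀ s : ℝ, t₀/2 < s → s < 2*t₀ → |Real.log s| ≤ L := by
    intro s h1 h2
    have hs0 : 0 < s := by linarith
    have hm1 : Real.log (t₀/2) ≤ Real.log s := Real.log_le_log (by positivity) h1.le
    have hm2 : Real.log s ≤ Real.log (2*t₀) := Real.log_le_log hs0 h2.le
    rw [abs_le]
    constructor
    · have := neg_abs_le (Real.log (t₀/2))
      have hmax := le_max_left |Real.log (t₀/2)| |Real.log (2*t₀)|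
      rw [hL]; linarith
    · have := le_abs_self (Real.log (2*t₀))
      have hmax := le_max_right |Real.log (t₀/2)| |Real.log (2*t₀)|
      rw [hL]; linarith
  have hL0 : 0 ≤ L := le_trans (abs_nonneg _) (le_max_left _ _)
  -- kernel rewriting
  have hrlog : ∀ s : ℝ, 0 < s → Real.log (c * s^(-α)) = lc + (-α) * Real.log s := by
    intro s hs
    rw [Real.log_mul hcpos.ne' (Real.rpow_pos_of_pos hs _).ne', Real.log_rpow hs]
  have hkernel : ∀ s : ℝ, 0 < s → ∀ u : ℝ, mellinKernel d α β γ σ ℓ (c * s^(-α)) u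
      = (HFun d α β γ σ ((ℓ:ℂ)+(u:ℂ)*I) * Complex.exp (-((ℓ:ℂ)+(u:ℂ)*I) * (lc:ℂ))) *
        Complex.exp (((α:ℂ) * ((ℓ:ℂ)+(u:ℂ)*I)) * (Real.log s : ℂ)) := by
    intro s hs u
    rw [mellinKernel, hrlog s hs, mul_assoc, ← Complex.exp_add]
    congr 2
    push_cast
    ring
  -- norms of the pieces
  have hexpnorm : ∀ (w : ℂ) (rr : ℝ), ‖Complex.exp (w * (rr:ℂ))‖ = Real.exp (w.re * rr) := by
    intro w rr
    rw [Complex.norm_exp]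
    congr 1
    simp [Complex.mul_re]
  -- define F and F'
  set φ : ℝ → ℝ → ℂ := fun s u => ((s ^ (-σ) : ℝ):ℂ) *
      mellinKernel d α β γ σ ℓ (c * s^(-α)) u with hφ
  set φ' : ℝ → ℝ → ℂ := fun s u => ((s ^ (-σ-1) : ℝ):ℂ) *
      (((α:ℂ) * ((ℓ:ℂ)+(u:ℂ)*I) - (σ:ℂ)) * mellinKernel d α β γ σ ℓ (c * s^(-α)) u) with hφ'
  set Cb : ℝ := Real.exp ((|σ|+1)*L) * Real.exp (|ℓ| *α*L) * Real.exp (|ℓ*lc|) *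
      (|σ| + α* |ℓ| + α) with hCb
  have hCb0 : 0 < Cb := by rw [hCb]; positivity
  -- norm computation for the kernel
  have hkn : ∀ s : ℝ, 0 < s → ∀ u : ℝ, ‖mellinKernel d α β γ σ ℓ (c * s^(-α)) u‖
      = ‖HFun d α β γ σ ((ℓ:ℂ)+(u:ℂ)*I)‖ * (Real.exp (-(ℓ*lc)) * Real.exp (α*ℓ*Real.log s)) := by
    intro s hs u
    have r1 : (-((ℓ:ℂ)+(u:ℂ)*I)).re = -ℓ := by simp
    have r2 : ((α:ℂ) * ((ℓ:ℂ)+(u:ℂ)*I)).re = α*ℓ := by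
      simp [Complex.mul_re]
    rw [hkernel s hs u, norm_mul, norm_mul, hexpnorm, hexpnorm, r1, r2]
    ring_nf
  -- bound for φ'
  have hbound : ∀ u : ℝ, ∀ s ∈ ball t₀ (t₀/2), ‖φ' s u‖ ≤ Cb * gN u := by
    intro u s hs
    obtain ⟨hs1, hs2⟩ := hball s hs
    have hspos : 0 < s := by linarith
    have hlogs := hlogL s hs1 hs2
    simp only [hφ', norm_mul, Complex.norm_real, Real.norm_eq_abs]
    rw [hkn s hspos u]
    have e1 : |s ^ (-σ-1)| ≤ Real.exp ((|σ|+1)*L) := by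
      rw [abs_of_pos (Real.rpow_pos_of_pos hspos _), Real.rpow_def_of_pos hspos]
      apply Real.exp_le_exp.mpr
      have habs1 : |(-σ-1 : ℝ)| ≤ |σ| + 1 := by
        rw [show (-σ-1 : ℝ) = -(σ + 1) from by ring, abs_neg]
        refine (abs_add_le σ 1).trans ?_
        simp
      calc Real.log s * (-σ-1) ≤ |Real.log s * (-σ-1)| := le_abs_self _
        _ = |Real.log s| * |(-σ-1)| := abs_mul _ _
        _ ≤ L * (|σ|+1) := by
            apply mul_le_mul hlogs habs1 (abs_nonneg _) hL0
        _ = (|σ|+1) * L := by ring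
    have e2 : ‖(α:ℂ) * ((ℓ:ℂ)+(u:ℂ)*I) - (σ:ℂ)‖ ≤ (|σ| + α* |ℓ| + α) * (1+|u|) := by
      rw [show (α:ℂ) * ((ℓ:ℂ)+(u:ℂ)*I) - (σ:ℂ) = ((α*ℓ-σ : ℝ):ℂ) + ((α*u : ℝ):ℂ)*I from by
        push_cast; ring]
      refine (norm_le_aux _ _).trans ?_
      have i1 : |α*ℓ-σ| ≤ α* |ℓ| + |σ| := by
        refine (abs_sub _ _).trans ?_
        rw [abs_mul, abs_of_pos hα]
      have i2 : |α*u| = α* |u| := by rw [abs_mul, abs_of_pos hα]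
      nlinarith [abs_nonneg u, abs_nonneg ℓ, abs_nonneg σ, abs_nonneg (α*ℓ-σ)]
    have e3 : Real.exp (-(ℓ*lc)) ≤ Real.exp (|ℓ*lc|) := by
      apply Real.exp_le_exp.mpr
      rw [← abs_neg]
      exact le_abs_self _
    have e4 : Real.exp (α*ℓ*Real.log s) ≤ Real.exp (|ℓ| *α*L) := by
      apply Real.exp_le_exp.mpr
      calc α*ℓ*Real.log s ≤ |α*ℓ*Real.log s| := le_abs_self _
        _ = α* |ℓ| * |Real.log s| := by rw [abs_mul, abs_mul, abs_of_pos hα]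
        _ ≤ α* |ℓ| *L := by
            apply mul_le_mul_of_nonneg_left hlogs (by positivity)
        _ = |ℓ| *α*L := by ring
    calc |s ^ (-σ-1)| * (‖(α:ℂ) * ((ℓ:ℂ)+(u:ℂ)*I) - (σ:ℂ)‖ *
          (‖HFun d α β γ σ ((ℓ:ℂ)+(u:ℂ)*I)‖ * (Real.exp (-(ℓ*lc)) * Real.exp (α*ℓ*Real.log s))))
        ≤ Real.exp ((|σ|+1)*L) * (((|σ| + α* |ℓ| + α) * (1+|u|)) *
          (‖HFun d α β γ σ ((ℓ:ℂ)+(u:ℂ)*I)‖ * (Real.exp (|ℓ*lc|) * Real.exp (|ℓ| *α*L)))) := by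
          gcongr <;> first
            | exact e1 | exact e2 | exact e3 | exact e4 | positivity
      _ = Cb * gN u := by
          rw [hCb, hgN]
          ring
  -- differentiability in s
  have hdiff : ∀ u : ℝ, ∀ s ∈ ball t₀ (t₀/2), HasDerivAt (fun s' => φ s' u) (φ' s u) s := by
    intro u s hs
    obtain ⟨hs1, hs2⟩ := hball s hs
    have hspos : 0 < s := by linarith
    set zu : ℂ := (ℓ:ℂ)+(u:ℂ)*I with hzu
    set Ku : ℂ := HFun d α β γ σ zu * Complex.exp (-zu * (lc:ℂ)) with hKu
    have hu1 : HasDerivAt (fun s' : ℝ => ((s' ^ (-σ) : ℝ):ℂ)) (((-σ * s^(-σ-1) : ℝ)):ℂ) s :=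
      (Real.hasDerivAt_rpow_const (Or.inl hspos.ne')).ofReal_comp
    have hlog' : HasDerivAt (fun s' : ℝ => ((Real.log s' : ℝ):ℂ)) (((s⁻¹:ℝ)):ℂ) s :=
      (Real.hasDerivAt_log hspos.ne').ofReal_comp
    have hinner : HasDerivAt (fun s' : ℝ => ((α:ℂ)*zu) * ((Real.log s' : ℝ):ℂ))
        (((α:ℂ)*zu) * ((s⁻¹:ℝ):ℂ)) s := hlog'.const_mul _
    have hexp : HasDerivAt (fun s' : ℝ => Complex.exp (((α:ℂ)*zu) * ((Real.log s' : ℝ):ℂ)))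
        (Complex.exp (((α:ℂ)*zu) * ((Real.log s : ℝ):ℂ)) * (((α:ℂ)*zu) * ((s⁻¹:ℝ):ℂ))) s :=
      hinner.cexp
    have hprod := (hu1.mul hexp).const_mul Ku
    have hev : (fun s' : ℝ => Ku * (((s' ^ (-σ) : ℝ):ℂ) *
        Complex.exp (((α:ℂ)*zu) * ((Real.log s' : ℝ):ℂ)))) =ᶠ[nhds s] (fun s' => φ s' u) := by
      filter_upwards [eventually_gt_nhds hspos] with s' hs'
      simp only [hφ]
      rw [hkernel s' hs' u, hKu, hzu]
      ring
    have hfinal := (hprod.congr_of_eventuallyEq hev.symm)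
    have hre : ((s^(-σ-1):ℝ):ℂ) = ((s^(-σ):ℝ):ℂ) * ((s⁻¹:ℝ):ℂ) := by
      rw [← Complex.ofReal_mul]
      congr 1
      rw [Real.rpow_sub_one hspos.ne', div_eq_mul_inv]
    have heq : φ' s u = Ku * (((-σ * s^(-σ-1) : ℝ):ℂ)
          * Complex.exp (((α:ℂ)*zu) * ((Real.log s : ℝ):ℂ))
        + ((s^(-σ) : ℝ):ℂ) * (Complex.exp (((α:ℂ)*zu) * ((Real.log s : ℝ):ℂ))
          * (((α:ℂ)*zu) * ((s⁻¹:ℝ):ℂ)))) := by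
      simp only [hφ']
      rw [hkernel s hspos u, hKu, hzu, Complex.ofReal_mul (-σ) (s^(-σ-1)), hre]
      push_cast
      ring
    rw [heq]
    exact hfinal
  -- measurability statements
  have hφcont : ∀ s : ℝ, Continuous (φ s) := by
    intro s
    simp only [hφ]
    exact continuous_const.mul (continuous_mellin_line d α β γ σ ℓ hA h1ℓ h2ℓ _)
  have hφ'cont : Continuous (φ' t₀) := by
    simp only [hφ']
    apply continuous_const.mul
    apply Continuous.mul (by fun_prop)
    exact continuous_mellin_line d α β γ σ ℓ hA h1ℓ h2ℓ _
  -- integrability of φ t₀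
  have hφint : Integrable (φ t₀) := by
    apply Integrable.mono' (hgNint.const_mul
      (t₀^(-σ) * (Real.exp (-(ℓ*lc)) * Real.exp (α*ℓ*Real.log t₀))))
      (hφcont t₀).aestronglyMeasurable
    apply Filter.Eventually.of_forall
    intro u
    have hφn : ‖φ t₀ u‖ = t₀^(-σ) * (‖HFun d α β γ σ ((ℓ:ℂ)+(u:ℂ)*I)‖
        * (Real.exp (-(ℓ*lc)) * Real.exp (α*ℓ*Real.log t₀))) := by
      simp only [hφ, norm_mul, Complex.norm_real, Real.norm_eq_abs]
      rw [hkn t₀ ht₀ u, _root_.abs_of_pos (Real.rpow_pos_of_pos ht₀ _)]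
    rw [hφn]
    have h1u : (1:ℝ) ≤ 1 + |u| := by
      have := abs_nonneg u
      linarith
    calc t₀^(-σ) * (‖HFun d α β γ σ ((ℓ:ℂ)+(u:ℂ)*I)‖
          * (Real.exp (-(ℓ*lc)) * Real.exp (α*ℓ*Real.log t₀)))
        = (t₀^(-σ) * (Real.exp (-(ℓ*lc)) * Real.exp (α*ℓ*Real.log t₀)))
          * ((1:ℝ) * ‖HFun d α β γ σ ((ℓ:ℂ)+(u:ℂ)*I)‖) := by ring
      _ ≤ (t₀^(-σ) * (Real.exp (-(ℓ*lc)) * Real.exp (α*ℓ*Real.log t₀)))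
          * ((1+|u|) * ‖HFun d α β γ σ ((ℓ:ℂ)+(u:ℂ)*I)‖) := by
          apply mul_le_mul_of_nonneg_left ?_ (by positivity)
          exact mul_le_mul_of_nonneg_right h1u (norm_nonneg _)
      _ = (t₀^(-σ) * (Real.exp (-(ℓ*lc)) * Real.exp (α*ℓ*Real.log t₀))) * gN u := by
          rw [hgN]
  -- the dominated derivative theorem
  have hmain := hasDerivAt_integral_of_dominated_loc_of_deriv_le (F := φ) (F' := φ')
    (x₀ := t₀) (s := ball t₀ (t₀/2)) (bound := fun u => Cb * gN u) (ball_mem_nhds t₀ (by linarith))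
    (Filter.Eventually.of_forall fun s => (hφcont s).aestronglyMeasurable)
    hφint hφ'cont.aestronglyMeasurable
    (Filter.Eventually.of_forall fun u => fun s hs => hbound u s hs)
    (hgNint.const_mul Cb)
    (Filter.Eventually.of_forall fun u => fun s hs => hdiff u s hs)
  obtain ⟨-, hderiv⟩ := hmain
  -- identify the function and the derivative
  set Kc : ℝ := (2:ℝ)^(2*γ) * Real.pi^(-(d:ℝ)/2) * ‖x‖^(-(d:ℝ)-2*γ) with hKc
  have hfeq : (fun s : ℝ => pFun d α β γ σ ℓ s x)
      = fun s => ((Kc:ℝ):ℂ) * (((1/(2*Real.pi) : ℝ)):ℂ) * ∫ u, φ s u := by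
    funext s
    rw [pFun, hFun]
    simp only [hφ]
    rw [show (∫ u, ((s ^ (-σ) : ℝ):ℂ) * mellinKernel d α β γ σ ℓ (c * s^(-α)) u)
        = ((s ^ (-σ) : ℝ):ℂ) * ∫ u, mellinKernel d α β γ σ ℓ (c * s^(-α)) u from
      integral_const_mul _ _]
    rw [← hc, hKc]
    push_cast
    ring
  have hgoal : pFun d α β γ (σ+1) ℓ t₀ x
      = ((Kc:ℝ):ℂ) * (((1/(2*Real.pi) : ℝ)):ℂ) * ∫ u, φ' t₀ u := by
    have hia : (∫ u, φ' t₀ u) = ((t₀ ^ (-σ-1) : ℝ):ℂ) *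
        ∫ u : ℝ, ((α:ℂ) * ((ℓ:ℂ)+(u:ℂ)*I) - (σ:ℂ)) * mellinKernel d α β γ σ ℓ (c * t₀^(-α)) u := by
      simp only [hφ']
      exact integral_const_mul _ _
    have hcongr : (∫ u : ℝ, ((α:ℂ) * ((ℓ:ℂ)+(u:ℂ)*I) - (σ:ℂ)) *
          mellinKernel d α β γ σ ℓ (c * t₀^(-α)) u)
        = ∫ u, mellinKernel d α β γ (σ+1) ℓ (c * t₀^(-α)) u := by
      apply integral_congr_ae
      filter_upwards [ae_ne_zero] with u hu
      have hw : (α:ℂ) * ((ℓ:ℂ)+(u:ℂ)*I) - (σ:ℂ) ≠ 0 := by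
        intro h
        have him := congrArg Complex.im h
        simp at him
        rcases him with h' | h'
        · exact hα.ne' h'
        · exact hu h'
      rw [mellinKernel, mellinKernel, HFun_succ d α β γ σ _ hw]
      ring
    rw [pFun, hFun, hia, hcongr, ← hc, hKc]
    rw [show -(σ+1) = -σ-1 from by ring]
    push_cast
    ring
  rw [hfeq, hgoal]
  exact hderiv.const_mul (((Kc:ℝ):ℂ) * (((1/(2*Real.pi) : ℝ)):ℂ))
end
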